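/- arXiv:2410.02758 — 7 statements merged into one kernel-verified Lean document; each statement's English description precedes it below -/
import Mathlib

section
/- For all natural numbers m ≤ d, the m! × m! Gram matrix G, indexed by pairs of permutations σ, τ of {1,…,m} with entries G_{σ,τ} = d^{c(στ⁻¹)}, is invertible (equivalently, the family of replica permutation matrices (P_σ)_{σ ∈ S_m} acting on (ℂ^d)^{⊗m} is linearly independent over ℂ). -/
open Equiv Finset Matrix

/-- Number of cycles of a permutation, counting fixed points as cycles of length 1. -/
def cycleCount {m : ℕ} (σ : Equiv.Perm (Fin m)) : ℕ :=
  σ.cycleType.card + (Finset.univ.filter fun x => σ x = x).card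

lemma fix_zpow {m d : ℕ} (π : Equiv.Perm (Fin m)) (g : Fin m → Fin d)
    (hg : ∀ x, g (π x) = g x) : ∀ (i : ℤ) (x), g ((π ^ i) x) = g x := by
  intro i
  induction i using Int.induction_on with
  | zero => intro x; simp
  | succ n ih =>
      intro x
      rw [_root_.zpow_add_one, Equiv.Perm.mul_apply]
      exact (ih (π x)).trans (hg x)
  | pred n ih =>
      intro x
      rw [_root_.zpow_sub_one, Equiv.Perm.mul_apply]
      have h1 : g (π⁻¹ x) = g x := by
        have := hg (π⁻¹ x); rw [show π (π⁻¹ x) = x from Equiv.apply_symm_apply π x] at this; exact this.symm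
      exact (ih (π⁻¹ x)).trans h1

lemma const_of_sameCycle {m d : ℕ} (π : Equiv.Perm (Fin m)) (g : Fin m → Fin d)
    (hg : ∀ x, g (π x) = g x) {x y : Fin m} (h : π.SameCycle x y) : g x = g y := by
  obtain ⟨i, hi⟩ := h
  rw [← hi]; exact (fix_zpow π g hg i x).symm

lemma card_fixedfun {m d : ℕ} (π : Equiv.Perm (Fin m)) :
    Fintype.card {g : Fin m → Fin d // ∀ x, g (π x) = g x} = d ^ cycleCount π := by
  classical
  let s : Setoid (Fin m) :=
    ⟨π.SameCycle, ⟨fun x => Equiv.Perm.SameCycle.refl π x, fun h => h.symm, fun h h' => h.trans h'⟩⟩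
  have hr : ∀ a b : Fin m, (s.r a b) ↔ π.SameCycle a b := fun _ _ => Iff.rfl
  -- equivalence with functions on the quotient
  let e1 : {g : Fin m → Fin d // ∀ x, g (π x) = g x} ≃ (Quotient s → Fin d) :=
    { toFun := fun g => Quotient.lift g.1 (fun a b h => const_of_sameCycle π g.1 g.2 h)
      invFun := fun h => ⟨fun x => h ⟦x⟧, fun x => congrArg h (Quotient.sound
        (Equiv.Perm.sameCycle_apply_right.mpr (Equiv.Perm.SameCycle.refl π x)).symm)⟩
      left_inv := fun g => Subtype.ext rfl
      right_inv := fun h => funext fun q => Quotient.inductionOn q (fun x => rfl) }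
  -- equivalence of the quotient with cycles ⊕ fixed points
  have fixed_eq : ∀ {a b : Fin m}, π.SameCycle a b → π a = a → a = b := by
    rintro a b ⟨i, hi⟩ ha
    rw [← hi, Equiv.Perm.zpow_apply_eq_self_of_apply_eq_self ha]
  let φ : Quotient s → ({c // c ∈ π.cycleFactorsFinset} ⊕ {x : Fin m // π x = x}) :=
    Quotient.lift (fun x =>
      if hx : π x = x then Sum.inr ⟨x, hx⟩
      else Sum.inl ⟨π.cycleOf x, Equiv.Perm.cycleOf_mem_cycleFactorsFinset_iff.mpr
        (Equiv.Perm.mem_support.mpr hx)⟩)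
      (by
        intro a b h
        by_cases ha : π a = a
        · have : a = b := fixed_eq h ha
          subst this; rfl
        · by_cases hb : π b = b
          · exact absurd (fixed_eq h.symm hb).symm (fun he => ha (he ▸ hb))
          · simp only [dif_neg ha, dif_neg hb]
            exact congrArg _ (Subtype.ext (Equiv.Perm.SameCycle.cycleOf_eq h)))
  have hφbij : Function.Bijective φ := by
    constructor
    · intro q1 q2
      refine Quotient.inductionOn₂ q1 q2 (fun a b hab => Quotient.sound ?_)
      by_cases ha : π a = a
      · by_cases hb : π b = b
        · simp only [φ, Quotient.lift_mk, dif_pos ha, dif_pos hb] at hab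
          cases hab
          exact Equiv.Perm.SameCycle.refl π a
        · simp [φ, dif_pos ha, dif_neg hb] at hab
      · by_cases hb : π b = b
        · simp [φ, dif_neg ha, dif_pos hb] at hab
        · simp only [φ, Quotient.lift_mk, dif_neg ha, dif_neg hb, Sum.inl.injEq,
            Subtype.mk.injEq] at hab
          have hbmem : b ∈ (π.cycleOf a).support := by
            rw [hab]
            exact Equiv.Perm.mem_support_cycleOf_iff.mpr
              ⟨Equiv.Perm.SameCycle.refl π b, Equiv.Perm.mem_support.mpr hb⟩
          exact (Equiv.Perm.mem_support_cycleOf_iff.mp hbmem).1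
    · rintro (⟨c, hc⟩ | ⟨x, hx⟩)
      · have hcyc : c.IsCycle := (Equiv.Perm.mem_cycleFactorsFinset_iff.mp hc).1
        obtain ⟨a, ha⟩ := hcyc.nonempty_support
        have haπ : π a ≠ a := by
          have h1 := (Equiv.Perm.mem_cycleFactorsFinset_iff.mp hc).2 a ha
          have h2 := Equiv.Perm.mem_support.mp ha
          rw [h1] at h2; exact h2
        refine ⟨⟦a⟧, ?_⟩
        simp only [φ, Quotient.lift_mk, dif_neg haπ]
        exact congrArg _ (Subtype.ext (Equiv.Perm.cycle_is_cycleOf ha hc).symm)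
      · exact ⟨⟦x⟧, by simp [φ, dif_pos hx]⟩
  have hcard : Fintype.card (Quotient s) = cycleCount π := by
    rw [Fintype.card_of_bijective hφbij, Fintype.card_sum, Fintype.card_coe,
      Fintype.card_subtype]
    unfold cycleCount
    congr 1
    rw [Equiv.Perm.cycleType_def, Multiset.card_map]
    rfl
  rw [Fintype.card_congr e1, Fintype.card_fun, Fintype.card_fin, hcard]

/-- The Gram matrix of permutations, `G_{σ,τ} = d^{c(στ⁻¹)}`. -/
def gramMatrix (d m : ℕ) :
    Matrix (Equiv.Perm (Fin m)) (Equiv.Perm (Fin m)) ℝ :=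
  fun σ τ => (d : ℝ) ^ cycleCount (σ * τ⁻¹)

/-- The replica permutation matrix `P_σ` on `(ℂ^d)^{⊗m}`. -/
def replicaPerm (d m : ℕ) (σ : Equiv.Perm (Fin m)) :
    Matrix (Fin m → Fin d) (Fin m → Fin d) ℂ :=
  fun f g => if f = g ∘ σ then 1 else 0

lemma aux_indep {m d : ℕ} {K : Type*} [Field K] (hmd : m ≤ d) (x : Equiv.Perm (Fin m) → K)
    (hx : ∀ f g : Fin m → Fin d,
      ∑ σ : Equiv.Perm (Fin m), (if f = g ∘ σ then (1 : K) else 0) * x σ = 0) :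
    x = 0 := by
  classical
  funext σ
  have h := hx (Fin.castLE hmd ∘ σ) (Fin.castLE hmd)
  have hcond : ∀ τ : Equiv.Perm (Fin m),
      ((Fin.castLE hmd ∘ σ : Fin m → Fin d) = Fin.castLE hmd ∘ τ) ↔ τ = σ := by
    intro τ
    constructor
    · intro he
      exact Equiv.ext fun y => (Fin.castLE_injective hmd (congrFun he y)).symm
    · rintro rfl; rfl
  simp only [hcond, ite_mul, one_mul, zero_mul] at h
  simpa using h

lemma cond_iff {m d : ℕ} (σ τ : Equiv.Perm (Fin m)) (g : Fin m → Fin d) :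
    (g ∘ σ = g ∘ τ) ↔ ∀ x, g ((σ * τ⁻¹) x) = g x := by
  constructor
  · intro h x
    have := congrFun h (τ⁻¹ x)
    simpa [Equiv.Perm.mul_apply, (Equiv.apply_symm_apply τ x : τ (τ⁻¹ x) = x)] using this
  · intro h
    funext y
    have := h (τ y)
    simpa [Equiv.Perm.mul_apply, (Equiv.symm_apply_apply τ y : τ⁻¹ (τ y) = y)] using this

lemma gram_entry {m d : ℕ} (σ τ : Equiv.Perm (Fin m)) :
    ∑ f : Fin m → Fin d, ∑ g : Fin m → Fin d,
      (if f = g ∘ σ then (1 : ℝ) else 0) * (if f = g ∘ τ then (1 : ℝ) else 0)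
      = gramMatrix d m σ τ := by
  classical
  rw [Finset.sum_comm]
  have h1 : ∀ g : Fin m → Fin d,
      ∑ f : Fin m → Fin d, (if f = g ∘ σ then (1 : ℝ) else 0) * (if f = g ∘ τ then (1 : ℝ) else 0)
        = if g ∘ σ = g ∘ τ then (1 : ℝ) else 0 := by
    intro g
    simp only [ite_mul, one_mul, zero_mul, Finset.sum_ite_eq', Finset.mem_univ, if_true]
  rw [Finset.sum_congr rfl (fun g _ => h1 g)]
  rw [Finset.sum_boole]
  have h2 : (Finset.univ.filter fun g : Fin m → Fin d => g ∘ σ = g ∘ τ).card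
      = Fintype.card {g : Fin m → Fin d // ∀ x, g ((σ * τ⁻¹) x) = g x} := by
    rw [Fintype.card_subtype]
    congr 1
    apply Finset.filter_congr
    intro g _
    exact cond_iff σ τ g
  rw [h2, card_fixedfun]
  simp [gramMatrix]

/-- For `m ≤ d` the Gram matrix `G_{σ,τ} = d^{c(στ⁻¹)}` is invertible; equivalently,
the replica permutation matrices `(P_σ)_{σ ∈ S_m}` are linearly independent over `ℂ`. -/
theorem gramMatrix_isUnit (m d : ℕ) (hmd : m ≤ d) :
    IsUnit (gramMatrix d m) ∧
      LinearIndependent ℂ (fun σ : Equiv.Perm (Fin m) => replicaPerm d m σ) := by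
  classical
  constructor
  · rw [Matrix.isUnit_iff_isUnit_det, isUnit_iff_ne_zero]
    intro hdet
    obtain ⟨v, hv0, hv⟩ := Matrix.exists_mulVec_eq_zero_iff.mpr hdet
    set B : Matrix ((Fin m → Fin d) × (Fin m → Fin d)) (Equiv.Perm (Fin m)) ℝ :=
      fun p ρ => if p.1 = p.2 ∘ ρ then 1 else 0 with hB
    have hG : gramMatrix d m = Bᵀ * B := by
      ext σ τ
      rw [← gram_entry σ τ, Matrix.mul_apply, Fintype.sum_prod_type]
      rfl
    have h2 : v ∈ LinearMap.ker (Bᵀ * B).mulVecLin := by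
      rw [LinearMap.mem_ker, Matrix.mulVecLin_apply, ← hG]
      exact hv
    rw [Matrix.ker_mulVecLin_transpose_mul_self] at h2
    have hker : B.mulVec v = 0 := by
      rw [LinearMap.mem_ker, Matrix.mulVecLin_apply] at h2
      exact h2
    have hv' : v = 0 := by
      apply aux_indep hmd v
      intro f g
      have := congrFun hker (f, g)
      simpa [Matrix.mulVec, dotProduct, hB] using this
    exact hv0 hv'
  · rw [Fintype.linearIndependent_iff]
    intro c hc
    have hc' : c = 0 := by
      apply aux_indep hmd c
      intro f g
      have h := congrFun (congrFun hc f) g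
      simpa [Matrix.sum_apply, Matrix.smul_apply, replicaPerm, smul_eq_mul, mul_comm] using h
    intro σ
    rw [hc']
    rfl
end

section
/- For all natural numbers 1 ≤ m ≤ d, the sum of the Weingarten function over all permutations of {1,…,m} equals the reciprocal of the rising factorial: ∑_{τ ∈ S_m} Wg_d(e, τ) = (d-1)!/(d+m-1)!, where e is the identity permutation. Equivalently, every row sum of the inverse Gram matrix G⁻¹ equals ((d+m-1)!/(d-1)!)⁻¹. -/
/-- The Weingarten function `Wg_d(σ,τ) = (G⁻¹)_{σ,τ}`. -/
noncomputable def weingarten (d m : ℕ) :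
    Matrix (Equiv.Perm (Fin m)) (Equiv.Perm (Fin m)) ℝ :=
  (gramMatrix d m)⁻¹

open Equiv Equiv.Perm Finset

variable {m d : ℕ}

@[reducible] def scs (π : Equiv.Perm (Fin m)) : Setoid (Fin m) :=
  ⟨π.SameCycle, ⟨SameCycle.refl π, fun h => h.symm, fun h1 h2 => h1.trans h2⟩⟩

instance (π : Equiv.Perm (Fin m)) : DecidableRel (scs π).r :=
  fun a b => (inferInstance : Decidable (π.SameCycle a b))

def toT (π : Equiv.Perm (Fin m)) (x : Fin m) :
    {x : Fin m // π x = x} ⊕ {c : Equiv.Perm (Fin m) // c ∈ π.cycleFactorsFinset} :=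
  if h : π x = x then .inl ⟨x, h⟩
  else .inr ⟨π.cycleOf x, cycleOf_mem_cycleFactorsFinset_iff.2 (mem_support.2 h)⟩

lemma toT_resp (π : Equiv.Perm (Fin m)) {x y : Fin m} (h : π.SameCycle x y) :
    toT π x = toT π y := by
  by_cases hx : π x = x
  · obtain ⟨i, hi⟩ := h
    rw [zpow_apply_eq_self_of_apply_eq_self hx i] at hi
    subst hi; rfl
  · have hy : ¬ π y = y := fun hy => hx (h.apply_eq_self_iff.2 hy)
    simp only [toT, dif_neg hx, dif_neg hy]
    exact congrArg _ (Subtype.ext h.cycleOf_eq)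

instance (π : Equiv.Perm (Fin m)) : Fintype (Quotient (scs π)) :=
  @Quotient.fintype _ _ (scs π) (fun a b => (inferInstance : Decidable (π.SameCycle a b)))

def qToT (π : Equiv.Perm (Fin m)) :
    Quotient (scs π) →
      {x : Fin m // π x = x} ⊕ {c : Equiv.Perm (Fin m) // c ∈ π.cycleFactorsFinset} :=
  Quotient.lift (toT π) (fun _ _ h => toT_resp π h)

lemma card_quot (π : Equiv.Perm (Fin m)) :
    Fintype.card (Quotient (scs π)) = cycleCount π := by
  have hbij : Function.Bijective (qToT π) := by
    constructor
    · intro a b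
      induction a using Quotient.ind
      induction b using Quotient.ind
      rename_i x y
      intro h
      simp only [qToT, Quotient.lift_mk] at h
      apply Quotient.sound
      by_cases hx : π x = x <;> by_cases hy : π y = y <;>
        simp only [qToT, Quotient.lift_mk, toT, dif_pos, dif_neg, hx, hy] at h
      · cases h; exact (scs π).refl x
      · exact absurd h (by simp)
      · exact absurd h (by simp)
      · have h' : π.cycleOf x = π.cycleOf y := congrArg Subtype.val (Sum.inr_injective h)
        have hy' : y ∈ (π.cycleOf x).support := by
          rw [h']
          exact mem_support_cycleOf_iff.2 ⟨SameCycle.refl π y, mem_support.2 hy⟩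
        exact (mem_support_cycleOf_iff.1 hy').1
    · rintro (⟨x, hx⟩ | ⟨c, hc⟩)
      · exact ⟨⟦x⟧, by simp [qToT, toT, dif_pos hx]⟩
      · obtain ⟨x, hcx, -⟩ := (mem_cycleFactorsFinset_iff.1 hc).1
        have hx : π x ≠ x := by
          rw [← (mem_cycleFactorsFinset_iff.1 hc).2 x (mem_support.2 hcx)]
          exact hcx
        refine ⟨⟦x⟧, ?_⟩
        simp only [qToT, Quotient.lift_mk, toT, dif_neg hx]
        exact congrArg _ (Subtype.ext (cycle_is_cycleOf (mem_support.2 hcx) hc).symm)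
  rw [Fintype.card_congr (Equiv.ofBijective _ hbij), Fintype.card_sum, Fintype.card_subtype,
    Fintype.card_coe, cycleCount, cycleType_def, Multiset.card_map, add_comm]
  rfl

instance (π : Equiv.Perm (Fin m)) : DecidableEq (Quotient (scs π)) :=
  @Quotient.decidableEq _ (scs π) (fun a b => (inferInstance : Decidable (π.SameCycle a b)))

lemma invariant_zpow {π : Equiv.Perm (Fin m)} {f : Fin m → Fin d}
    (hf : ∀ x, f (π x) = f x) : ∀ (i : ℤ) (x : Fin m), f ((π ^ i) x) = f x := by
  have hpow : ∀ (τ : Equiv.Perm (Fin m)), (∀ x, f (τ x) = f x) →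
      ∀ (n : ℕ) (x : Fin m), f ((τ ^ n) x) = f x := by
    intro τ hτ n
    induction n with
    | zero => intro x; simp
    | succ n ih => intro x; rw [pow_succ, Equiv.Perm.mul_apply, ih (τ x), hτ]
  have hinv : ∀ (τ : Equiv.Perm (Fin m)), (∀ x, f (τ x) = f x) →
      ∀ x, f (τ⁻¹ x) = f x := by
    intro τ hτ x
    conv_rhs => rw [← (show τ (τ⁻¹ x) = x from Equiv.apply_symm_apply τ x)]
    rw [hτ]
  intro i x
  cases i with
  | ofNat n => rw [Int.ofNat_eq_coe, zpow_natCast]; exact hpow π hf n x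
  | negSucc n =>
      rw [zpow_negSucc]
      exact hinv _ (hpow π hf (n + 1)) x

def invEquiv (π : Equiv.Perm (Fin m)) (d : ℕ) :
    {f : Fin m → Fin d // ∀ x, f (π x) = f x} ≃ (Quotient (scs π) → Fin d) where
  toFun f := Quotient.lift f.1 (fun a b (h : π.SameCycle a b) => by
    obtain ⟨i, hi⟩ := h
    rw [← hi, invariant_zpow f.2])
  invFun g := ⟨fun x => g ⟦x⟧, fun x => by
    refine congrArg g (Quotient.sound ?_)
    exact Equiv.Perm.SameCycle.symm ⟨1, by simp⟩⟩
  left_inv f := Subtype.ext rfl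
  right_inv g := by
    funext q
    induction q using Quotient.ind
    rfl

lemma card_invariant (π : Equiv.Perm (Fin m)) :
    Fintype.card {f : Fin m → Fin d // ∀ x, f (π x) = f x} = d ^ cycleCount π := by
  rw [Fintype.card_congr (invEquiv π d), Fintype.card_fun, Fintype.card_fin, card_quot]

lemma filter_card_invariant (π : Equiv.Perm (Fin m)) :
    (Finset.univ.filter fun f : Fin m → Fin d => f ∘ ⇑π = f).card = d ^ cycleCount π := by
  rw [← card_invariant π, Fintype.card_subtype]
  congr 1
  ext f
  simp [funext_iff, Function.comp]

attribute [local instance] arrowAction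

lemma cycleCount_inv (σ : Equiv.Perm (Fin m)) : cycleCount σ⁻¹ = cycleCount σ := by
  unfold cycleCount
  rw [Equiv.Perm.cycleType_inv]
  congr 2
  ext x
  simp only [Finset.mem_filter, Finset.mem_univ, true_and]
  rw [Equiv.Perm.inv_eq_iff_eq, eq_comm]

lemma map_univ_val (e : Equiv.Perm (Fin m)) :
    (Finset.univ.val.map ⇑e) = (Finset.univ.val : Multiset (Fin m)) := by
  have h := congrArg Finset.val (Finset.map_univ_equiv e)
  rw [Finset.map_val] at h
  exact h

def toMult (f : Fin m → Fin d) : Sym (Fin d) m :=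
  ⟨Finset.univ.val.map f, by simp⟩

lemma toMult_resp {f g : Fin m → Fin d}
    (h : (MulAction.orbitRel (Equiv.Perm (Fin m)) (Fin m → Fin d)).r f g) :
    toMult f = toMult g := by
  obtain ⟨σ, hσ⟩ := MulAction.mem_orbit_iff.1 h
  have hfg : f = g ∘ ⇑σ⁻¹ := by
    rw [← hσ]; rfl
  apply Subtype.ext
  show Finset.univ.val.map f = Finset.univ.val.map g
  rw [hfg, ← Multiset.map_map]
  congr 1
  exact map_univ_val σ⁻¹

instance : Fintype (Quotient (MulAction.orbitRel (Equiv.Perm (Fin m)) (Fin m → Fin d))) :=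
  @Quotient.fintype _ _ (MulAction.orbitRel (Equiv.Perm (Fin m)) (Fin m → Fin d))
    (fun f g => decidable_of_iff (∃ σ : Equiv.Perm (Fin m), σ • g = f)
      MulAction.mem_orbit_iff.symm)

def qToMult : Quotient (MulAction.orbitRel (Equiv.Perm (Fin m)) (Fin m → Fin d)) →
    Sym (Fin d) m :=
  Quotient.lift toMult (fun _ _ h => toMult_resp h)

lemma count_toMult (f : Fin m → Fin d) (i : Fin d) :
    Multiset.count i (Finset.univ.val.map f)
      = (Finset.univ.filter fun a => f a = i).card := by
  rw [Multiset.count_map]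
  have h : (Finset.univ.filter fun a => f a = i) = (Finset.univ.filter fun a => i = f a) := by
    ext a; simp [eq_comm]
  rw [h, Finset.card_def, Finset.filter_val]

lemma orbit_card :
    Fintype.card (Quotient (MulAction.orbitRel (Equiv.Perm (Fin m)) (Fin m → Fin d)))
      = (d + m - 1).choose m := by
  have hbij : Function.Bijective (qToMult (m := m) (d := d)) := by
    constructor
    · intro a b
      induction a using Quotient.ind
      induction b using Quotient.ind
      rename_i f g
      intro h
      simp only [qToMult, Quotient.lift_mk] at h
      have hcount : ∀ i, (Finset.univ.filter fun a => f a = i).card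
          = (Finset.univ.filter fun a => g a = i).card := by
        intro i
        rw [← count_toMult, ← count_toMult]
        exact congrArg (Multiset.count i) (congrArg Subtype.val h)
      have hfib : ∀ i, Fintype.card {a // f a = i} = Fintype.card {a // g a = i} := by
        intro i
        rw [Fintype.card_subtype, Fintype.card_subtype, hcount]
      set σ : Fin m ≃ Fin m :=
        Equiv.ofFiberEquiv (f := f) (g := g) (fun i =>
          ((Equiv.subtypeEquivRight
              (fun a => (by simp : a ∈ f ⁻¹' {i} ↔ f a = i))).trans
            (Fintype.equivOfCardEq (hfib i))).trans
            (Equiv.subtypeEquivRight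
              (fun a => (by simp : g a = i ↔ a ∈ g ⁻¹' {i})))) with hσdef
      have hgs : ∀ a, g (σ a) = f a := fun a => Equiv.ofFiberEquiv_map _ a
      apply Quotient.sound
      refine MulAction.mem_orbit_iff.2 ⟨σ⁻¹, ?_⟩
      funext a
      show g ((σ⁻¹)⁻¹ • a) = f a
      rw [inv_inv]
      exact hgs a
    · intro s
      obtain ⟨ms, hms⟩ := s
      set l : List (Fin d) := ms.toList with hl
      have hlen : l.length = m := by
        rw [hl, Multiset.length_toList, hms]
      refine ⟨⟦fun i => l.get (Fin.cast hlen.symm i)⟧, ?_⟩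
      apply Subtype.ext
      simp only [qToMult, Quotient.lift_mk, toMult]
      show Finset.univ.val.map (fun i => l.get (Fin.cast hlen.symm i)) = ms
      have hcomp : (fun i : Fin m => l.get (Fin.cast hlen.symm i))
          = l.get ∘ ⇑(finCongr hlen.symm) := rfl
      rw [hcomp, ← Multiset.map_map]
      have huniv : (Finset.univ.val.map ⇑(finCongr hlen.symm))
          = (Finset.univ.val : Multiset (Fin l.length)) := by
        have h := congrArg Finset.val (Finset.map_univ_equiv (finCongr hlen.symm))
        rw [Finset.map_val] at h
        exact h
      rw [huniv]
      have hfr : (Finset.univ.val : Multiset (Fin l.length)) = ↑(List.finRange l.length) := rfl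
      rw [hfr, Multiset.map_coe, List.map_get_finRange]
      rw [hl, Multiset.coe_toList]
  rw [Fintype.card_congr (Equiv.ofBijective _ hbij), Sym.card_sym_eq_choose, Fintype.card_fin]

lemma card_fixedBy (σ : Equiv.Perm (Fin m)) :
    Fintype.card (MulAction.fixedBy (Fin m → Fin d) σ) = d ^ cycleCount σ := by
  rw [← cycleCount_inv σ, ← card_invariant (d := d) σ⁻¹]
  apply Fintype.card_congr
  apply Equiv.subtypeEquivRight
  intro f
  show σ • f = f ↔ _
  constructor
  · intro h x
    conv_rhs => rw [← h]
    rfl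
  · intro h
    funext x
    exact h x

lemma sum_pow_cycleCount :
    (∑ σ : Equiv.Perm (Fin m), d ^ cycleCount σ) = (d + m - 1).choose m * m.factorial := by
  have hb := MulAction.sum_card_fixedBy_eq_card_orbits_mul_card_group
    (Equiv.Perm (Fin m)) (Fin m → Fin d)
  rw [Fintype.card_perm, Fintype.card_fin] at hb
  calc (∑ σ : Equiv.Perm (Fin m), d ^ cycleCount σ)
      = ∑ σ : Equiv.Perm (Fin m), Fintype.card (MulAction.fixedBy (Fin m → Fin d) σ) :=
        Finset.sum_congr rfl fun σ _ => (card_fixedBy σ).symm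
    _ = _ := by rw [hb, orbit_card]

open Matrix

def Amat (d m : ℕ) :
    Matrix ((Fin m → Fin d) × (Fin m → Fin d)) (Equiv.Perm (Fin m)) ℝ :=
  fun p σ => if p.2 = p.1 ∘ ⇑σ then 1 else 0

lemma comp_eq_iff (σ τ : Equiv.Perm (Fin m)) (f : Fin m → Fin d) :
    f ∘ ⇑σ = f ∘ ⇑τ ↔ f ∘ ⇑(σ * τ⁻¹) = f := by
  constructor
  · intro h
    funext x
    have := congrFun h (τ⁻¹ x)
    simpa using this
  · intro h
    funext x
    have := congrFun h (τ x)
    simpa using this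

lemma gram_eq : gramMatrix d m = (Amat d m)ᵀ * Amat d m := by
  ext σ τ
  rw [Matrix.mul_apply]
  rw [Fintype.sum_prod_type]
  have hinner : ∀ f : Fin m → Fin d,
      (∑ g : Fin m → Fin d, (Amat d m)ᵀ σ (f, g) * Amat d m (f, g) τ)
        = if f ∘ ⇑σ = f ∘ ⇑τ then 1 else 0 := by
    intro f
    simp only [Matrix.transpose_apply, Amat]
    rw [Finset.sum_eq_single (f ∘ ⇑σ)]
    · simp
    · intro g _ hg
      rw [if_neg hg, zero_mul]
    · intro hh
      exact absurd (Finset.mem_univ _) hh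
  rw [Finset.sum_congr rfl fun f _ => hinner f]
  have : (∑ f : Fin m → Fin d, if f ∘ ⇑σ = f ∘ ⇑τ then (1:ℝ) else 0)
      = ∑ f : Fin m → Fin d, if f ∘ ⇑(σ * τ⁻¹) = f then (1:ℝ) else 0 := by
    refine Finset.sum_congr rfl fun f _ => ?_
    rw [if_congr (comp_eq_iff σ τ f) rfl rfl]
  rw [this, Finset.sum_boole, filter_card_invariant (σ * τ⁻¹)]
  simp [gramMatrix]

lemma gram_isUnit (hmd : m ≤ d) : IsUnit (gramMatrix d m) := by
  rw [← Matrix.mulVec_injective_iff_isUnit]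
  have hker : ∀ z : Equiv.Perm (Fin m) → ℝ, gramMatrix d m *ᵥ z = 0 → z = 0 := by
    intro z hz
    have h0 : (Amat d m *ᵥ z) ⬝ᵥ (Amat d m *ᵥ z) = 0 := by
      have : z ⬝ᵥ (gramMatrix d m *ᵥ z) = 0 := by rw [hz]; simp
      rwa [gram_eq, ← Matrix.mulVec_mulVec, Matrix.dotProduct_mulVec,
        Matrix.vecMul_transpose] at this
    have hw : ∀ p, (Amat d m *ᵥ z) p = 0 := by
      intro p
      have hnn : ∀ q ∈ Finset.univ, 0 ≤ (Amat d m *ᵥ z) q * (Amat d m *ᵥ z) q :=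
        fun q _ => mul_self_nonneg _
      have := (Finset.sum_eq_zero_iff_of_nonneg hnn).1 h0 p (Finset.mem_univ p)
      exact mul_self_eq_zero.1 this
    funext σ
    have hinj : Function.Injective (Fin.castLE hmd) := Fin.castLE_injective hmd
    have hp := hw (Fin.castLE hmd, Fin.castLE hmd ∘ ⇑σ)
    rw [Matrix.mulVec, dotProduct] at hp
    have hsum : ∀ τ : Equiv.Perm (Fin m),
        Amat d m (Fin.castLE hmd, Fin.castLE hmd ∘ ⇑σ) τ * z τ
          = if τ = σ then z τ else 0 := by
      intro τ
      simp only [Amat]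
      by_cases h : τ = σ
      · subst h; simp
      · rw [if_neg, if_neg h, zero_mul]
        intro hc
        exact h (Equiv.coe_fn_injective (hinj.comp_left hc)).symm
    rw [Finset.sum_congr rfl fun τ _ => hsum τ, Finset.sum_ite_eq' Finset.univ σ] at hp
    simpa using hp
  intro a b hab
  have : gramMatrix d m *ᵥ (a - b) = 0 := by
    rw [Matrix.mulVec_sub, hab, sub_self]
  have := hker _ this
  exact sub_eq_zero.1 this

/-- For `1 ≤ m ≤ d`, `∑_{τ ∈ S_m} Wg_d(e, τ) = (d-1)!/(d+m-1)!`; equivalently, every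
row sum of the inverse Gram matrix equals `((d+m-1)!/(d-1)!)⁻¹`. -/
theorem weingarten_sum (m d : ℕ) (hm : 1 ≤ m) (hmd : m ≤ d) :
    (∑ τ : Equiv.Perm (Fin m), weingarten d m 1 τ)
        = ((d - 1).factorial : ℝ) / ((d + m - 1).factorial : ℝ) ∧
      ∀ σ : Equiv.Perm (Fin m),
        (∑ τ : Equiv.Perm (Fin m), weingarten d m σ τ)
          = (((d + m - 1).factorial : ℝ) / ((d - 1).factorial : ℝ))⁻¹ := by
  have hd : 1 ≤ d := le_trans hm hmd
  set K : ℕ := (d + m - 1).choose m * m.factorial with hK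
  have hrow : ∀ σ : Equiv.Perm (Fin m),
      (∑ τ : Equiv.Perm (Fin m), gramMatrix d m σ τ) = (K : ℝ) := by
    intro σ
    have he : ∀ τ : Equiv.Perm (Fin m),
        gramMatrix d m σ τ
          = (fun ρ => ((d : ℝ) ^ cycleCount ρ))
              (((Equiv.inv (Equiv.Perm (Fin m))).trans (Equiv.mulLeft σ)) τ) := by
      intro τ; rfl
    rw [Fintype.sum_congr _ _ he]
    rw [Equiv.sum_comp ((Equiv.inv (Equiv.Perm (Fin m))).trans (Equiv.mulLeft σ))
      (fun ρ => ((d : ℝ) ^ cycleCount ρ))]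
    have : (∑ ρ : Equiv.Perm (Fin m), ((d : ℝ) ^ cycleCount ρ))
        = ((∑ ρ : Equiv.Perm (Fin m), d ^ cycleCount ρ : ℕ) : ℝ) := by push_cast; rfl
    rw [this, sum_pow_cycleCount]
  have hdet : IsUnit (gramMatrix d m).det :=
    (Matrix.isUnit_iff_isUnit_det _).1 (gram_isUnit hmd)
  have hKnat : (d - 1).factorial * K = (d + m - 1).factorial := by
    have h1 : m ≤ d + m - 1 := by omega
    have h2 := Nat.choose_mul_factorial_mul_factorial h1
    have h3 : d + m - 1 - m = d - 1 := by omega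
    rw [h3] at h2
    rw [hK, ← h2]; ring
  have hfacpos : (0:ℝ) < ((d - 1).factorial : ℝ) := by
    exact_mod_cast Nat.factorial_pos _
  have hKreal : (K : ℝ) = ((d + m - 1).factorial : ℝ) / ((d - 1).factorial : ℝ) := by
    rw [eq_div_iff (ne_of_gt hfacpos)]
    rw [mul_comm]
    exact_mod_cast congrArg (Nat.cast (R := ℝ)) hKnat
  have hmain : ∀ σ : Equiv.Perm (Fin m),
      (∑ τ : Equiv.Perm (Fin m), weingarten d m σ τ) = (K : ℝ)⁻¹ := by
    intro σ
    have h1 : gramMatrix d m *ᵥ (fun _ => (1:ℝ)) = fun _ => (K : ℝ) := by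
      funext ρ
      show (∑ τ, gramMatrix d m ρ τ * 1) = (K : ℝ)
      simpa [mul_one] using hrow ρ
    have h2 : weingarten d m *ᵥ (fun _ => (K:ℝ)) = fun _ => (1:ℝ) := by
      rw [← h1]
      show (gramMatrix d m)⁻¹ *ᵥ _ = _
      rw [Matrix.mulVec_mulVec, Matrix.nonsing_inv_mul _ hdet, Matrix.one_mulVec]
    have h3 := congrFun h2 σ
    have h4 : (∑ τ : Equiv.Perm (Fin m), weingarten d m σ τ) * (K:ℝ) = 1 := by
      rw [Finset.sum_mul]
      exact h3
    exact eq_inv_of_mul_eq_one_left h4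
  constructor
  · rw [hmain 1, hKreal, inv_div]
  · intro σ
    rw [hmain σ, hKreal]
end

section
/- There exists a constant C > 0 such that for all natural numbers m ≥ 1 and d with 2m² ≤ d, the Weingarten function at the identity satisfies |d^m · Wg_d(e, e) − 1| ≤ C · m²/d, where e is the identity permutation of {1,…,m}. In other words, Wg_d(e) = d^{-m}(1 + O(m²/d)). -/
namespace WgAux

open Equiv Finset
open scoped Classical

lemma isCycle_swap_list {α : Type*} [Fintype α] [DecidableEq α] :
    ∀ (n : ℕ) (σ : Equiv.Perm α), σ.support.card = n → σ.IsCycle →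
    ∃ l : List (Equiv.Perm α), (∀ τ ∈ l, τ.IsSwap) ∧ l.length + 1 = n ∧ l.prod = σ := by
  intro n
  induction n using Nat.strong_induction_on with
  | _ n ih =>
    intro σ hcard hσ
    obtain ⟨x, hx, -⟩ := id hσ
    by_cases h1 : σ (σ x) = x
    · have hswap : σ = Equiv.swap x (σ x) := hσ.eq_swap_of_apply_apply_eq_self hx h1
      refine ⟨[σ], ?_, ?_, by simp⟩
      · rintro τ hτ
        rw [List.mem_singleton] at hτ
        exact hτ ▸ ⟨x, σ x, Ne.symm hx, hswap⟩
      · rw [← hcard]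
        rw [show σ.support = (Equiv.swap x (σ x)).support from by rw [← hswap]]
        rw [Equiv.Perm.card_support_swap (Ne.symm hx)]
        rfl
    · have hcy : (Equiv.swap x (σ x) * σ).IsCycle := hσ.swap_mul hx h1
      have hpos : 1 ≤ σ.support.card :=
        Finset.card_pos.2 ⟨x, Equiv.Perm.mem_support.2 hx⟩
      have hlt : (Equiv.swap x (σ x) * σ).support.card < n :=
        hcard ▸ Equiv.Perm.card_support_swap_mul hx
      have hcard' : (Equiv.swap x (σ x) * σ).support.card + 1 = n := by
        rw [Equiv.Perm.support_swap_mul_eq _ _ h1, Finset.sdiff_singleton_eq_erase,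
          Finset.card_erase_of_mem (Equiv.Perm.mem_support.2 hx)]
        omega
      obtain ⟨l, hl1, hl2, hl3⟩ := ih _ hlt _ rfl hcy
      refine ⟨Equiv.swap x (σ x) :: l, ?_, ?_, ?_⟩
      · rintro τ hτ
        rcases List.mem_cons.1 hτ with h | h
        · exact h ▸ ⟨x, σ x, Ne.symm hx, rfl⟩
        · exact hl1 τ h
      · simp only [List.length_cons]; omega
      · rw [List.prod_cons, hl3, ← mul_assoc, Equiv.swap_mul_self, one_mul]

lemma exists_swap_list {α : Type*} [Fintype α] [DecidableEq α] (σ : Equiv.Perm α) :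
    ∃ l : List (Equiv.Perm α), (∀ τ ∈ l, τ.IsSwap) ∧
      l.length + σ.cycleType.card = σ.cycleType.sum ∧ l.prod = σ := by
  induction σ using Equiv.Perm.cycle_induction_on with
  | base_one => exact ⟨[], by simp, by simp, List.prod_nil⟩
  | base_cycles σ hσ =>
    obtain ⟨l, h1, h2, h3⟩ := isCycle_swap_list σ.support.card σ rfl hσ
    refine ⟨l, h1, ?_, h3⟩
    rw [hσ.cycleType]
    simpa using h2
  | induction_disjoint σ τ hd hc hσ hτ =>
    obtain ⟨l1, g1, g2, g3⟩ := hσ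
    obtain ⟨l2, k1, k2, k3⟩ := hτ
    refine ⟨l1 ++ l2, ?_, ?_, by rw [List.prod_append, g3, k3]⟩
    · intro u hu
      rcases List.mem_append.1 hu with h | h
      exacts [g1 u h, k1 u h]
    · rw [Equiv.Perm.Disjoint.cycleType_mul hd]
      simp only [List.length_append, Multiset.card_add, Multiset.sum_add]
      omega

lemma key {m : ℕ} (σ : Equiv.Perm (Fin m)) :
    cycleCount σ + (m - cycleCount σ) = m
    ∧ (σ ≠ 1 → 1 ≤ m - cycleCount σ)
    ∧ ∃ l : List (Equiv.Perm (Fin m)), (∀ τ ∈ l, τ.IsSwap) ∧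
        l.length = m - cycleCount σ ∧ l.prod = σ := by
  have hsum := Equiv.Perm.sum_cycleType σ
  have hs_le : σ.support.card ≤ m := le_trans (Finset.card_le_univ _) (by simp)
  have h2c : σ.cycleType.card * 2 ≤ σ.cycleType.sum := by
    have := Multiset.card_nsmul_le_sum (s := σ.cycleType) (a := 2)
      (fun x hx => Equiv.Perm.two_le_of_mem_cycleType hx)
    simpa [smul_eq_mul, mul_comm] using this
  have hfix : (Finset.univ.filter fun x => σ x = x).card + σ.support.card = m := by
    have h1 : σ.support = Finset.univ.filter (fun x => ¬ σ x = x) := by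
      ext y; simp [Equiv.Perm.mem_support]
    rw [h1, Finset.card_filter_add_card_filter_not]
    simp [Finset.card_univ]
  have hcc : cycleCount σ + σ.support.card = σ.cycleType.card + m := by
    unfold cycleCount; omega
  have hone : σ ≠ 1 → 1 ≤ σ.cycleType.card := by
    intro h
    rcases Nat.eq_zero_or_pos σ.cycleType.card with h0 | h0
    · exact absurd (Equiv.Perm.cycleType_eq_zero.1 (Multiset.card_eq_zero.1 h0)) h
    · exact h0
  obtain ⟨l, hl1, hl2, hl3⟩ := exists_swap_list σ
  exact ⟨by omega, fun h => by have := hone h; omega, l, hl1, by omega, hl3⟩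

lemma card_swaps_le (m : ℕ) :
    2 * (Finset.univ.filter fun τ : Equiv.Perm (Fin m) => τ.IsSwap).card ≤ m * m := by
  have hinj : ((Finset.univ.filter fun τ : Equiv.Perm (Fin m) => τ.IsSwap) :
      Set (Equiv.Perm (Fin m))).InjOn Equiv.Perm.support := by
    intro τ1 h1 τ2 h2 h
    simp only [Finset.coe_filter, Set.mem_setOf_eq, Finset.mem_univ, true_and] at h1 h2
    obtain ⟨a, b, hab, rfl⟩ := h1
    obtain ⟨c, d, hcd, rfl⟩ := h2
    rw [Equiv.Perm.support_swap hab, Equiv.Perm.support_swap hcd] at h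
    have ha : a = c ∨ a = d := by
      have : a ∈ ({c, d} : Finset (Fin m)) := h ▸ Finset.mem_insert_self a {b}
      simpa using this
    have hb : b = c ∨ b = d := by
      have : b ∈ ({c, d} : Finset (Fin m)) := h ▸ (by simp : b ∈ ({a, b} : Finset (Fin m)))
      simpa using this
    rcases ha with rfl | rfl
    · rcases hb with rfl | rfl
      · exact absurd rfl hab
      · rfl
    · rcases hb with rfl | rfl
      · exact Equiv.swap_comm a b
      · exact absurd rfl hab
  have hmap : ∀ τ ∈ Finset.univ.filter fun τ : Equiv.Perm (Fin m) => τ.IsSwap,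
      Equiv.Perm.support τ ∈ Finset.powersetCard 2 (Finset.univ : Finset (Fin m)) := by
    intro τ hτ
    obtain ⟨a, b, hab, rfl⟩ := (Finset.mem_filter.1 hτ).2
    exact Finset.mem_powersetCard.2 ⟨Finset.subset_univ _,
      by rw [Equiv.Perm.support_swap hab]; simp [Finset.card_insert_of_notMem, hab]⟩
  have hcard := Finset.card_le_card_of_injOn _ hmap hinj
  rw [Finset.card_powersetCard, Finset.card_univ, Fintype.card_fin, Nat.choose_two_right] at hcard
  have := Nat.div_mul_le_self (m * (m - 1)) 2
  have hle : m * (m - 1) ≤ m * m := Nat.mul_le_mul_left m (Nat.sub_le m 1)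
  omega

lemma card_fiber_le (m k : ℕ) :
    (Finset.univ.filter fun σ : Equiv.Perm (Fin m) => σ ≠ 1 ∧ m - cycleCount σ = k).card ≤
      (Finset.univ.filter fun τ : Equiv.Perm (Fin m) => τ.IsSwap).card ^ k := by
  have hsurj : Set.SurjOn (fun v : Fin k → Equiv.Perm (Fin m) => (List.ofFn v).prod)
      (Fintype.piFinset fun _ : Fin k =>
        Finset.univ.filter fun τ : Equiv.Perm (Fin m) => τ.IsSwap)
      (Finset.univ.filter fun σ : Equiv.Perm (Fin m) => σ ≠ 1 ∧ m - cycleCount σ = k) := by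
    intro σ hσ
    simp only [Finset.coe_filter, Set.mem_setOf_eq, Finset.mem_univ, true_and] at hσ
    obtain ⟨-, -, l, hl1, hl2, hl3⟩ := key σ
    have hlk : l.length = k := hl2.trans hσ.2
    subst hlk
    refine ⟨l.get, ?_, by show (List.ofFn l.get).prod = σ; rw [List.ofFn_get]; exact hl3⟩
    rw [Finset.mem_coe, Fintype.mem_piFinset]
    intro i
    simp only [Finset.mem_filter, Finset.mem_univ, true_and]
    have : l.get i ∈ l := by
      have := List.get_mem l i
      simpa using this
    exact hl1 _ this
  have := Finset.card_le_card_of_surjOn _ hsurj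
  calc (Finset.univ.filter fun σ : Equiv.Perm (Fin m) => σ ≠ 1 ∧ m - cycleCount σ = k).card
      ≤ _ := this
    _ = _ := by
        rw [Fintype.card_piFinset]
        simp

section Helper

attribute [local instance] Matrix.linftyOpNormedAddCommGroup Matrix.linftyOpNormedRing

variable {n : Type*} [Fintype n] [DecidableEq n] [Nonempty n]

private theorem matCompl : @CompleteSpace (Matrix n n ℝ)
    (PseudoMetricSpace.toUniformSpace (α := Matrix n n ℝ)) := by
  letI : NormedSpace ℝ (Matrix n n ℝ) := Matrix.linftyOpNormedSpace
  exact FiniteDimensional.complete ℝ _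

attribute [local instance] matCompl

lemma inverse_entry_bound (E : Matrix n n ℝ) (b : ℝ) (hb : b ≤ 1/3)
    (hrow : ∀ i, ∑ j, |E i j| ≤ b) (i : n) :
    ∃ B : Matrix n n ℝ, (1 + E) * B = 1 ∧ |B i i - 1| ≤ 3/2 * b := by
  have hb0 : 0 ≤ b :=
    le_trans (Finset.sum_nonneg fun j _ => abs_nonneg _) (hrow (Classical.arbitrary n))
  have hE : ‖E‖ ≤ b := by
    rw [Matrix.linfty_opNorm_def, ← Real.coe_toNNReal b hb0, NNReal.coe_le_coe]
    apply Finset.sup_le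
    intro i' _
    rw [← NNReal.coe_le_coe, NNReal.coe_sum, Real.coe_toNNReal b hb0]
    simpa [Real.norm_eq_abs] using hrow i'
  have hlt : ‖-E‖ < 1 := by rw [norm_neg]; linarith
  set U := Units.oneSub (-E) hlt with hU
  have hUval : (U : Matrix n n ℝ) = 1 + E := by
    rw [hU, Units.val_oneSub, sub_neg_eq_add]
  refine ⟨↑U⁻¹, ?_, ?_⟩
  · rw [← hUval]; exact U.mul_inv
  · have hBdef : (↑U⁻¹ : Matrix n n ℝ) = ∑' k : ℕ, (-E) ^ k := rfl
    have hsummable : Summable fun k : ℕ => (-E) ^ k := summable_geometric_of_norm_lt_one hlt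
    have hsplit : (↑U⁻¹ : Matrix n n ℝ) - 1 = ∑' k : ℕ, (-E) ^ (k + 1) := by
      rw [hBdef, Summable.tsum_eq_zero_add hsummable, pow_zero]
      abel
    have hgeom : HasSum (fun k : ℕ => ‖-E‖ ^ (k + 1)) (‖-E‖ * (1 - ‖-E‖)⁻¹) := by
      have := (hasSum_geometric_of_lt_one (norm_nonneg (-E)) hlt).mul_left ‖-E‖
      simpa [pow_succ, mul_comm] using this
    have hnorm : ‖(↑U⁻¹ : Matrix n n ℝ) - 1‖ ≤ ‖-E‖ * (1 - ‖-E‖)⁻¹ := by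
      rw [hsplit]
      exact tsum_of_norm_bounded hgeom fun k => norm_pow_le' _ (Nat.succ_pos k)
    have hr : ‖-E‖ ≤ b := by rw [norm_neg]; exact hE
    have hfinal : ‖-E‖ * (1 - ‖-E‖)⁻¹ ≤ 3/2 * b := by
      have h1 : ‖-E‖ ≤ 1/3 := le_trans hr hb
      have h0 : 0 ≤ ‖-E‖ := norm_nonneg _
      have h2 : (1 - ‖-E‖)⁻¹ ≤ 3/2 := by
        rw [inv_le_comm₀ (by linarith) (by norm_num)]
        linarith
      calc ‖-E‖ * (1 - ‖-E‖)⁻¹ ≤ b * (3/2) :=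
            mul_le_mul hr h2 (inv_nonneg.2 (by linarith)) hb0
        _ = 3/2 * b := by ring
    have hentry : |(↑U⁻¹ : Matrix n n ℝ) i i - 1| ≤ ‖(↑U⁻¹ : Matrix n n ℝ) - 1‖ := by
      set M := (↑U⁻¹ - 1 : Matrix n n ℝ) with hM
      have h1 : (↑U⁻¹ : Matrix n n ℝ) i i - 1 = M i i := by
        simp [hM, Matrix.sub_apply, Matrix.one_apply_eq]
      rw [h1, Matrix.linfty_opNorm_def]
      have h2 : ‖M i i‖₊ ≤ (Finset.univ : Finset n).sup (fun i' : n => ∑ j : n, ‖M i' j‖₊) :=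
        le_trans (Finset.single_le_sum (f := fun j : n => ‖M i j‖₊)
          (fun _ _ => zero_le) (Finset.mem_univ i))
          (Finset.le_sup (f := fun i' : n => ∑ j : n, ‖M i' j‖₊) (Finset.mem_univ i))
      calc |M i i| = (‖M i i‖₊ : ℝ) := by rw [coe_nnnorm, Real.norm_eq_abs]
        _ ≤ _ := NNReal.coe_le_coe.2 h2
    exact le_trans hentry (le_trans hnorm hfinal)

end Helper

end WgAux

/-- `Wg_d(e) = d^{-m} (1 + O(m²/d))`: there is a constant `C > 0` such that for all
`m ≥ 1` and `d ≥ 2m²`, `|d^m · Wg_d(e,e) − 1| ≤ C m²/d`. -/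
theorem weingarten_identity_asymptotics :
    ∃ C : ℝ, 0 < C ∧ ∀ m d : ℕ, 1 ≤ m → 2 * m ^ 2 ≤ d →
      |(d : ℝ) ^ m * weingarten d m 1 1 - 1| ≤ C * (m : ℝ) ^ 2 / (d : ℝ) := by
  classical
  refine ⟨2, by norm_num, ?_⟩
  intro m d hm hd
  have hm2 : 1 ≤ m ^ 2 := Nat.one_le_pow _ _ (by omega)
  have hd2 : 2 ≤ d := by omega
  have hd0 : (0:ℝ) < d := by
    have : (0:ℕ) < d := by omega
    exact_mod_cast this
  have hdm0 : ((d:ℝ))^m ≠ 0 := pow_ne_zero _ (ne_of_gt hd0)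
  have hcast : 2 * (m:ℝ)^2 ≤ d := by exact_mod_cast hd
  have hm0 : (0:ℝ) < (m:ℝ) := by exact_mod_cast Nat.lt_of_lt_of_le Nat.zero_lt_one hm
  have hcc1 : cycleCount (1 : Equiv.Perm (Fin m)) = m := by
    unfold cycleCount
    simp [Equiv.Perm.cycleType_one]
  -- the perturbation matrix
  set E : Matrix (Equiv.Perm (Fin m)) (Equiv.Perm (Fin m)) ℝ :=
    fun σ τ => if σ = τ then 0 else gramMatrix d m σ τ / (d:ℝ)^m with hEdef
  have hgram : gramMatrix d m = ((d:ℝ)^m) • (1 + E) := by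
    ext σ τ
    by_cases h : σ = τ
    · subst h
      have hdiag : gramMatrix d m σ σ = (d:ℝ)^m := by
        unfold gramMatrix
        rw [mul_inv_cancel, hcc1]
      simp [Matrix.smul_apply, Matrix.add_apply, Matrix.one_apply_eq]
      simp [hEdef, hdiag]
    · simp only [Matrix.smul_apply, Matrix.add_apply, Matrix.one_apply, if_neg h]
      simp only [hEdef, if_neg h]
      rw [zero_add, smul_eq_mul]
      field_simp
  -- row sums
  set x : ℝ := (m:ℝ)^2 / (2 * d) with hxdef
  have hx0 : 0 ≤ x := by positivity
  have hx4 : x ≤ 1/4 := by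
    rw [hxdef, div_le_iff₀ (by positivity)]
    nlinarith
  set b : ℝ := 2/3 * ((m:ℝ)^2 / d) with hbdef
  have hb : b ≤ 1/3 := by
    rw [hbdef]
    have : (m:ℝ)^2 / d ≤ 1/2 := by
      rw [div_le_iff₀ hd0]; nlinarith
    linarith
  have hrow : ∀ σ : Equiv.Perm (Fin m), ∑ τ, |E σ τ| ≤ b := by
    intro σ
    -- reindex the sum over the group
    have hrei : ∑ τ, |E σ τ| =
        ∑ π : Equiv.Perm (Fin m), (if π = 1 then 0 else (d:ℝ)^(cycleCount π) / (d:ℝ)^m) := by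
      refine Fintype.sum_equiv ((Equiv.inv (Equiv.Perm (Fin m))).trans (Equiv.mulLeft σ)) _ _ ?_
      intro τ
      simp only [Equiv.trans_apply, Equiv.inv_apply, Equiv.coe_mulLeft]
      by_cases h : σ = τ
      · rw [if_pos (by rw [h, mul_inv_cancel]), hEdef]
        simp [h]
      · rw [if_neg (fun hc => h (by rwa [mul_inv_eq_one] at hc)), hEdef]
        simp only [if_neg h]
        rw [abs_of_nonneg (by unfold gramMatrix; positivity)]
        rfl
    have hfilter : ∑ π : Equiv.Perm (Fin m), (if π = 1 then 0 else (d:ℝ)^(cycleCount π) / (d:ℝ)^m) =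
        ∑ π ∈ Finset.univ.filter (fun π : Equiv.Perm (Fin m) => π ≠ 1),
          (d:ℝ)^(cycleCount π) / (d:ℝ)^m := by
      rw [Finset.sum_filter]
      exact Finset.sum_congr rfl fun π _ => by by_cases h : π = 1 <;> simp [h]
    rw [hrei, hfilter]
    -- fiber over k = m - cycleCount π
    have hmaps : ∀ π ∈ Finset.univ.filter (fun π : Equiv.Perm (Fin m) => π ≠ 1),
        m - cycleCount π ∈ Finset.Icc 1 m := by
      intro π hπ
      have hπ1 : π ≠ 1 := (Finset.mem_filter.1 hπ).2
      obtain ⟨h1, h2, -⟩ := WgAux.key π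
      exact Finset.mem_Icc.2 ⟨h2 hπ1, Nat.sub_le _ _⟩
    rw [← Finset.sum_fiberwise_of_maps_to hmaps]
    -- bound each fiber
    have hfiber : ∀ k ∈ Finset.Icc 1 m,
        (∑ π ∈ (Finset.univ.filter fun π : Equiv.Perm (Fin m) => π ≠ 1).filter
            (fun π => m - cycleCount π = k), (d:ℝ)^(cycleCount π) / (d:ℝ)^m) ≤ x ^ k := by
      intro k hk
      have hterm : ∀ π ∈ (Finset.univ.filter fun π : Equiv.Perm (Fin m) => π ≠ 1).filter
          (fun π => m - cycleCount π = k), (d:ℝ)^(cycleCount π) / (d:ℝ)^m = ((d:ℝ)^k)⁻¹ := by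
        intro π hπ
        simp only [Finset.mem_filter, Finset.mem_univ, true_and] at hπ
        have hck : cycleCount π + k = m := by
          obtain ⟨h1, -, -⟩ := WgAux.key π
          omega
        have hmm : (d:ℝ)^m = (d:ℝ)^(cycleCount π) * (d:ℝ)^k := by rw [← pow_add, hck]
        rw [div_eq_iff hdm0, hmm]
        field_simp
      rw [Finset.sum_congr rfl hterm, Finset.sum_const, nsmul_eq_mul]
      -- cardinality bound
      have hcard1 : (Finset.univ.filter fun π : Equiv.Perm (Fin m) => π ≠ 1).filter
          (fun π => m - cycleCount π = k) =
          Finset.univ.filter fun σ : Equiv.Perm (Fin m) => σ ≠ 1 ∧ m - cycleCount σ = k := by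
        rw [Finset.filter_filter]
      have hcard2 := WgAux.card_fiber_le m k
      have hsw := WgAux.card_swaps_le m
      have hcardR : (((Finset.univ.filter fun π : Equiv.Perm (Fin m) => π ≠ 1).filter
          (fun π => m - cycleCount π = k)).card : ℝ) ≤ ((m:ℝ)^2 / 2) ^ k := by
        rw [hcard1]
        calc ((Finset.univ.filter fun σ : Equiv.Perm (Fin m) =>
                σ ≠ 1 ∧ m - cycleCount σ = k).card : ℝ)
            ≤ (((Finset.univ.filter fun τ : Equiv.Perm (Fin m) => τ.IsSwap).card : ℝ)) ^ k := by
              exact_mod_cast hcard2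
          _ ≤ ((m:ℝ)^2 / 2) ^ k := by
              apply pow_le_pow_left₀ (Nat.cast_nonneg _)
              have : ((Finset.univ.filter fun τ : Equiv.Perm (Fin m) => τ.IsSwap).card : ℝ) * 2
                  ≤ (m:ℝ) * m := by exact_mod_cast (by omega : (Finset.univ.filter
                    fun τ : Equiv.Perm (Fin m) => τ.IsSwap).card * 2 ≤ m * m)
              rw [le_div_iff₀ (by norm_num)]
              nlinarith
      calc (((Finset.univ.filter fun π : Equiv.Perm (Fin m) => π ≠ 1).filter
              (fun π => m - cycleCount π = k)).card : ℝ) * ((d:ℝ)^k)⁻¹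
          ≤ ((m:ℝ)^2 / 2) ^ k * ((d:ℝ)^k)⁻¹ := by
            apply mul_le_mul_of_nonneg_right hcardR (by positivity)
        _ = x ^ k := by
            have hxx : x = ((m:ℝ)^2/2) * (d:ℝ)⁻¹ := by rw [hxdef]; ring
            rw [hxx, mul_pow, inv_pow]
    calc ∑ k ∈ Finset.Icc 1 m, (∑ π ∈ (Finset.univ.filter
            fun π : Equiv.Perm (Fin m) => π ≠ 1).filter
            (fun π => m - cycleCount π = k), (d:ℝ)^(cycleCount π) / (d:ℝ)^m)
        ≤ ∑ k ∈ Finset.Icc 1 m, x ^ k := Finset.sum_le_sum hfiber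
      _ ≤ ∑ k ∈ Finset.Icc 1 m, x * (1/4 : ℝ)^(k-1) := by
          apply Finset.sum_le_sum
          intro k hk
          have hk1 : 1 ≤ k := (Finset.mem_Icc.1 hk).1
          have : x ^ k = x * x ^ (k - 1) := by
            rw [← pow_succ']
            congr 1
            omega
          rw [this]
          exact mul_le_mul_of_nonneg_left (pow_le_pow_left₀ hx0 hx4 _) hx0
      _ = x * ∑ k ∈ Finset.Icc 1 m, (1/4 : ℝ)^(k-1) := by rw [Finset.mul_sum]
      _ ≤ x * (4/3) := by
          apply mul_le_mul_of_nonneg_left _ hx0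
          have hre : ∑ k ∈ Finset.Icc 1 m, (1/4 : ℝ)^(k-1) =
              ∑ j ∈ Finset.range m, (1/4 : ℝ)^j := by
            refine Finset.sum_nbij' (fun k => k - 1) (fun j => j + 1) ?_ ?_ ?_ ?_ ?_
            · intro a ha; simp only [Finset.mem_Icc] at ha; simp only [Finset.mem_range]; omega
            · intro a ha; simp only [Finset.mem_range] at ha; simp only [Finset.mem_Icc]; omega
            · intro a ha; show a - 1 + 1 = a; simp only [Finset.mem_Icc] at ha; omega
            · intro a ha; show a + 1 - 1 = a; omega
            · intro a ha; rfl
          rw [hre]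
          have hsum_le : ∑ j ∈ Finset.range m, (1/4 : ℝ)^j ≤ (1 - 1/4)⁻¹ := by
            have hsummable : Summable (fun j : ℕ => (1/4 : ℝ)^j) :=
              summable_geometric_of_lt_one (by norm_num) (by norm_num)
            have := Summable.sum_le_tsum (Finset.range m) (fun j _ => by positivity) hsummable
            rwa [tsum_geometric_of_lt_one (by norm_num) (by norm_num)] at this
          linarith
      _ ≤ b := le_of_eq (by rw [hbdef, hxdef]; ring)
  -- apply the Neumann series bound
  obtain ⟨B, hB1, hB2⟩ := WgAux.inverse_entry_bound E b hb hrow 1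
  have hwg : weingarten d m = ((d:ℝ)^m)⁻¹ • B := by
    unfold weingarten
    apply Matrix.inv_eq_right_inv
    rw [hgram, Matrix.smul_mul, Matrix.mul_smul, hB1, smul_smul, mul_inv_cancel₀ hdm0, one_smul]
  rw [hwg, Matrix.smul_apply, smul_eq_mul, ← mul_assoc, mul_inv_cancel₀ hdm0, one_mul]
  have hfin : 3/2 * b = (m:ℝ)^2 / d := by rw [hbdef]; ring
  have hnn : 0 ≤ (m:ℝ)^2 / d := by positivity
  calc |B 1 1 - 1| ≤ 3/2 * b := hB2
    _ = (m:ℝ)^2 / d := hfin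
    _ ≤ 2 * (m:ℝ)^2 / d := by
        rw [div_le_div_iff₀ hd0 hd0]
        nlinarith
end

section
/- There exists a constant C > 0 such that for all natural numbers m ≥ 1 and d with 2m² ≤ d, the total absolute Weingarten mass satisfies |∑_{β ∈ S_m} d^m · |Wg_d(e, β)| − 1| ≤ C · m²/d, where the sum ranges over all permutations β of {1,…,m} and e is the identity permutation. -/
namespace Wg
open Finset Equiv

variable {m d : ℕ}

/-! ### Basic cycle-count lemmas -/

lemma cycleCount_one (m : ℕ) : cycleCount (1 : Equiv.Perm (Fin m)) = m := by
  simp [cycleCount, Equiv.Perm.cycleType_one]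

lemma two_mul_card_cycleType_le (σ : Equiv.Perm (Fin m)) :
    2 * σ.cycleType.card ≤ σ.support.card := by
  rw [← Equiv.Perm.sum_cycleType]
  have := Multiset.card_nsmul_le_sum (fun x hx => Equiv.Perm.two_le_of_mem_cycleType (σ := σ) hx)
  simpa [mul_comm] using this

lemma cycleCount_eq (σ : Equiv.Perm (Fin m)) :
    cycleCount σ = σ.cycleType.card + (m - σ.support.card) := by
  have h : (Finset.univ.filter fun x => σ x = x) = σ.supportᶜ := by
    ext x; simp [Equiv.Perm.mem_support]
  rw [cycleCount, h, Finset.card_compl]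
  simp

lemma support_card_le (σ : Equiv.Perm (Fin m)) : σ.support.card ≤ m := by
  simpa using Finset.card_le_univ σ.support

/-! ### Counting permutations with given support size -/

noncomputable def F (hm : 1 ≤ m) (k : ℕ) (σ : Equiv.Perm (Fin m)) : Fin k → Fin m :=
  fun i => σ ((σ.support.sort (· ≤ ·)).getD i ⟨0, hm⟩)

lemma image_F (hm : 1 ≤ m) {k : ℕ} (σ : Equiv.Perm (Fin m)) (hσ : σ.support.card = k) :
    Finset.image (F hm k σ) Finset.univ = σ.support := by
  have hlen : (σ.support.sort (· ≤ ·)).length = k := by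
    rw [Finset.length_sort, hσ]
  apply Finset.Subset.antisymm
  · intro y hy
    simp only [Finset.mem_image, Finset.mem_univ, true_and] at hy
    obtain ⟨i, rfl⟩ := hy
    have hi : (i : ℕ) < (σ.support.sort (· ≤ ·)).length := by rw [hlen]; exact i.2
    rw [F, List.getD_eq_getElem _ _ hi]
    have : (σ.support.sort (· ≤ ·))[(i:ℕ)] ∈ σ.support := by
      rw [← Finset.mem_sort (· ≤ ·)]
      exact List.getElem_mem _
    rwa [Equiv.Perm.apply_mem_support]
  · intro y hy
    have h1 : σ⁻¹ y ∈ σ.support := by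
      rw [← Equiv.Perm.support_inv σ] at hy ⊢; rwa [Equiv.Perm.apply_mem_support]
    rw [← Finset.mem_sort (· ≤ ·)] at h1
    obtain ⟨i, hi, hget⟩ := List.mem_iff_getElem.mp h1
    refine Finset.mem_image.mpr ⟨⟨i, by rwa [hlen] at hi⟩, Finset.mem_univ _, ?_⟩
    rw [F]
    simp only
    rw [List.getD_eq_getElem _ _ hi, hget]
    simp

lemma injOn_F (hm : 1 ≤ m) (k : ℕ) :
    Set.InjOn (F hm k) ((Finset.univ : Finset (Equiv.Perm (Fin m))).filter
      fun σ => σ.support.card = k) := by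
  intro σ hσ τ hτ hF
  simp only [Finset.coe_filter, Set.mem_setOf_eq, Finset.mem_univ, true_and] at hσ hτ
  have hsupp : σ.support = τ.support := by
    rw [← image_F hm σ hσ, ← image_F hm τ hτ, hF]
  ext x
  by_cases hx : x ∈ σ.support
  · have hx' : x ∈ (σ.support.sort (· ≤ ·)) := by rwa [Finset.mem_sort]
    obtain ⟨i, hi, hget⟩ := List.mem_iff_getElem.mp hx'
    have hik : i < k := by rwa [Finset.length_sort, hσ] at hi
    have h1 : F hm k σ ⟨i, hik⟩ = σ x := by
      rw [F]; simp only; rw [List.getD_eq_getElem _ _ hi, hget]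
    have h2 : F hm k τ ⟨i, hik⟩ = τ x := by
      rw [F]; simp only [← hsupp]; rw [List.getD_eq_getElem _ _ hi, hget]
    rw [← h1, ← h2, hF]
  · have hx2 : x ∉ τ.support := by rwa [← hsupp]
    rw [Equiv.Perm.notMem_support] at hx hx2
    rw [hx, hx2]

lemma card_support_filter_le (hm : 1 ≤ m) (k : ℕ)
    (s : Finset (Equiv.Perm (Fin m))) :
    (s.filter fun σ => σ.support.card = k).card ≤ m ^ k := by
  have h1 : (s.filter fun σ => σ.support.card = k) ⊆
      ((Finset.univ : Finset (Equiv.Perm (Fin m))).filter fun σ => σ.support.card = k) := by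
    intro σ hσ; simp only [Finset.mem_filter] at *; exact ⟨Finset.mem_univ _, hσ.2⟩
  calc (s.filter fun σ => σ.support.card = k).card
      ≤ ((Finset.univ : Finset (Equiv.Perm (Fin m))).filter
          fun σ => σ.support.card = k).card := Finset.card_le_card h1
    _ ≤ (Finset.univ : Finset (Fin k → Fin m)).card := by
        apply Finset.card_le_card_of_injOn (F hm k) (fun _ _ => Finset.mem_univ _)
        exact injOn_F hm k
    _ = m ^ k := by simp [Finset.card_univ]

/-! ### Involutions -/

def Pmap (σ : Equiv.Perm (Fin m)) : Finset (Fin m × Fin m) :=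
  (σ.support.filter fun x => x < σ x).image (fun x => (x, σ x))

lemma mem_Pmap {σ : Equiv.Perm (Fin m)} {a b : Fin m} :
    (a, b) ∈ Pmap σ ↔ a < b ∧ σ a = b := by
  constructor
  · rintro h
    simp only [Pmap, Finset.mem_image, Finset.mem_filter] at h
    obtain ⟨x, ⟨_, hlt⟩, hx⟩ := h
    injection hx with h1 h2
    subst h1; subst h2
    exact ⟨hlt, rfl⟩
  · rintro ⟨hlt, rfl⟩
    simp only [Pmap, Finset.mem_image, Finset.mem_filter]
    exact ⟨a, ⟨Equiv.Perm.mem_support.mpr (ne_of_lt hlt).symm, hlt⟩, rfl⟩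

lemma inv_apply {σ : Equiv.Perm (Fin m)} (hσ : σ * σ = 1) (x : Fin m) : σ (σ x) = x := by
  have := congrArg (fun p => p x) hσ
  simpa [Equiv.Perm.mul_apply] using this

lemma cycleType_two {σ : Equiv.Perm (Fin m)} (hσ : σ * σ = 1) :
    ∀ p ∈ σ.cycleType, p = 2 := by
  intro p hp
  have h2 : orderOf σ ∣ 2 := orderOf_dvd_iff_pow_eq_one.mpr (by rw [pow_two]; exact hσ)
  have hdvd : p ∣ 2 := dvd_trans (by rw [← Equiv.Perm.lcm_cycleType]; exact Multiset.dvd_lcm hp)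
    h2
  have := Equiv.Perm.two_le_of_mem_cycleType hp
  exact le_antisymm (Nat.le_of_dvd (by norm_num) hdvd) this

lemma two_mul_cycleType_card {σ : Equiv.Perm (Fin m)} (hσ : σ * σ = 1) :
    2 * σ.cycleType.card = σ.support.card := by
  have h := Multiset.eq_replicate_card.mpr (cycleType_two hσ)
  rw [← Equiv.Perm.sum_cycleType]
  conv_rhs => rw [h]
  rw [Multiset.sum_replicate]
  simp [mul_comm]

lemma two_mul_filter_card {σ : Equiv.Perm (Fin m)} (hσ : σ * σ = 1) :
    2 * (σ.support.filter fun x => x < σ x).card = σ.support.card := by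
  have hcard : (σ.support.filter fun x => x < σ x).card
      = (σ.support.filter fun x => σ x < x).card := by
    apply Finset.card_bij (fun x _ => σ x)
    · intro a ha
      simp only [Finset.mem_filter] at ha ⊢
      refine ⟨?_, ?_⟩
      · rw [Equiv.Perm.apply_mem_support]; exact ha.1
      · rw [inv_apply hσ]; exact ha.2
    · intro a ha b hb hab
      exact σ.injective hab
    · intro b hb
      simp only [Finset.mem_filter] at hb
      refine ⟨σ b, Finset.mem_filter.mpr ⟨?_, ?_⟩, ?_⟩
      · rw [Equiv.Perm.apply_mem_support]; exact hb.1
      · rw [inv_apply hσ]; exact hb.2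
      · rw [inv_apply hσ]
  have hsplit := Finset.card_filter_add_card_filter_not
    (s := σ.support) (p := fun x => x < σ x)
  have h2 : (σ.support.filter fun x => ¬ x < σ x) = (σ.support.filter fun x => σ x < x) := by
    apply Finset.filter_congr
    intro x hx
    have hne : σ x ≠ x := Equiv.Perm.mem_support.mp hx
    constructor
    · intro h; simp only [not_lt] at h; exact lt_of_le_of_ne h hne
    · intro h; exact not_lt.mpr (le_of_lt h)
  rw [h2] at hsplit
  omega

lemma card_Pmap {σ : Equiv.Perm (Fin m)} (hσ : σ * σ = 1) :
    (Pmap σ).card = σ.support.card - σ.cycleType.card := by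
  have h1 : (Pmap σ).card = (σ.support.filter fun x => x < σ x).card := by
    apply Finset.card_image_of_injOn
    intro a _ b _ hab
    exact congrArg Prod.fst hab
  have h2 := two_mul_filter_card hσ
  have h3 := two_mul_cycleType_card hσ
  omega

def U (m : ℕ) : Finset (Fin m × Fin m) := Finset.univ.filter fun p => p.1 < p.2

lemma Pmap_subset_U (σ : Equiv.Perm (Fin m)) : Pmap σ ⊆ U m := by
  intro p hp
  obtain ⟨a, b⟩ := p
  rw [mem_Pmap] at hp
  simp only [U, Finset.mem_filter, Finset.mem_univ, true_and]
  exact hp.1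

lemma moves_agree {σ τ : Equiv.Perm (Fin m)} (hσ : σ * σ = 1) (hτ : τ * τ = 1)
    (hP : Pmap σ = Pmap τ) {x : Fin m} (hx : σ x ≠ x) : τ x = σ x := by
  rcases lt_or_gt_of_ne hx.symm with h | h
  · have h3 : (x, σ x) ∈ Pmap σ := mem_Pmap.mpr ⟨h, rfl⟩
    rw [hP, mem_Pmap] at h3
    exact h3.2
  · have h3 : (σ x, x) ∈ Pmap σ := mem_Pmap.mpr ⟨h, inv_apply hσ x⟩
    rw [hP, mem_Pmap] at h3
    have h2 : τ (σ x) = x := h3.2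
    calc τ x = τ (τ (σ x)) := by rw [h2]
      _ = σ x := inv_apply hτ _

lemma Pmap_inj {σ τ : Equiv.Perm (Fin m)} (hσ : σ * σ = 1) (hτ : τ * τ = 1)
    (hP : Pmap σ = Pmap τ) : σ = τ := by
  apply Equiv.ext
  intro x
  rcases eq_or_ne (σ x) x with h1 | h1
  · rcases eq_or_ne (τ x) x with h2 | h2
    · rw [h1, h2]
    · have h3 := moves_agree hτ hσ hP.symm h2
      rw [h1] at h3 ⊢
      exact h3
  · exact (moves_agree hσ hτ hP h1).symm

lemma two_mul_card_U : 2 * (U m).card = m * m - m := by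
  have hV : (U m).card = ((Finset.univ : Finset (Fin m × Fin m)).filter
      fun p => p.2 < p.1).card := by
    apply Finset.card_bij (fun p _ => Prod.swap p)
    · intro p hp
      simp only [U, Finset.mem_filter, Finset.mem_univ, true_and] at hp ⊢
      exact hp
    · intro a _ b _ hab
      exact Prod.swap_injective hab
    · intro b hb
      simp only [U, Finset.mem_filter, Finset.mem_univ, true_and] at hb ⊢
      exact ⟨b.swap, hb, by simp⟩
  have hunion : U m ∪ ((Finset.univ : Finset (Fin m × Fin m)).filter fun p => p.2 < p.1)
      = (Finset.univ : Finset (Fin m)).offDiag := by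
    ext p
    rw [Finset.mem_union, Finset.mem_offDiag]
    simp only [U, Finset.mem_filter, Finset.mem_univ, true_and]
    constructor
    · rintro (h | h)
      · exact ne_of_lt h
      · exact (ne_of_lt h).symm
    · rintro h
      rcases lt_or_gt_of_ne h with h' | h'
      · exact Or.inl h'
      · exact Or.inr h'
  have hdisj : Disjoint (U m) ((Finset.univ : Finset (Fin m × Fin m)).filter
      fun p => p.2 < p.1) := by
    rw [Finset.disjoint_left]
    intro p hp hp'
    simp only [U, Finset.mem_filter, Finset.mem_univ, true_and] at hp hp'
    exact absurd hp (not_lt.mpr (le_of_lt hp'))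
  have hcard := Finset.card_union_of_disjoint hdisj
  rw [hunion, Finset.offDiag_card] at hcard
  simp only [Finset.card_univ, Fintype.card_fin] at hcard
  omega

/-! ### Elementary inequalities -/

lemma one_add_pow_le {y : ℝ} (hy : 0 ≤ y) :
    ∀ N : ℕ, (N : ℝ) * y ≤ 1 / 2 → (1 + y) ^ N ≤ 1 + 2 * N * y := by
  intro N
  induction N with
  | zero => simp
  | succ n ih =>
    intro h
    have hn : (n : ℝ) * y ≤ 1 / 2 := le_trans (by push_cast; nlinarith) h
    have h1 := ih hn
    calc (1+y)^(n+1) = (1+y)^n * (1+y) := by ring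
      _ ≤ (1 + 2*n*y) * (1+y) := by nlinarith
      _ ≤ 1 + 2*(n+1)*y := by nlinarith
      _ = 1 + 2*((n:ℝ)+1)*y := by ring
      _ = 1 + 2*((n+1 : ℕ):ℝ)*y := by push_cast; ring

lemma sum_powerset_pow {ι : Type*} [DecidableEq ι] (s : Finset ι) (y : ℝ) :
    ∑ Q ∈ s.powerset, y ^ Q.card = (y + 1) ^ s.card := by
  have h := Finset.prod_add (fun _ : ι => y) (fun _ : ι => 1) s
  simp only [Finset.prod_const, Finset.prod_const_one, one_pow, mul_one] at h
  rw [h]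

/-! ### Part A : involutions -/

lemma d_pos (hm : 1 ≤ m) (hd : 2 * m ^ 2 ≤ d) : 2 ≤ d := by
  have : 1 ≤ m ^ 2 := Nat.one_le_pow _ _ hm
  omega

lemma partA (hm : 1 ≤ m) (hd : 2 * m ^ 2 ≤ d) :
    ∑ σ ∈ ((Finset.univ.erase (1 : Equiv.Perm (Fin m))).filter fun σ => σ * σ = 1),
      (1 / (d : ℝ)) ^ (σ.support.card - σ.cycleType.card)
      ≤ ((m : ℝ) ^ 2 - m) / d := by
  have hd2 : 2 ≤ d := d_pos hm hd
  have hd0 : (0 : ℝ) < d := by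
    have : (2 : ℝ) ≤ d := by exact_mod_cast hd2
    linarith
  set S := ((Finset.univ.erase (1 : Equiv.Perm (Fin m))).filter fun σ => σ * σ = 1) with hS
  set y : ℝ := 1 / d with hy_def
  have hy : 0 ≤ y := by positivity
  have hstep1 : ∑ σ ∈ S, y ^ (σ.support.card - σ.cycleType.card)
      = ∑ σ ∈ S, y ^ (Pmap σ).card := by
    apply Finset.sum_congr rfl
    intro σ hσ
    rw [hS, Finset.mem_filter] at hσ
    rw [card_Pmap hσ.2]
  rw [hstep1]
  have hinj : ∀ σ ∈ S, ∀ τ ∈ S, Pmap σ = Pmap τ → σ = τ := by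
    intro σ hσ τ hτ h
    rw [hS, Finset.mem_filter] at hσ hτ
    exact Pmap_inj hσ.2 hτ.2 h
  rw [show (∑ σ ∈ S, y ^ (Pmap σ).card) = ∑ Q ∈ S.image Pmap, y ^ Q.card from (Finset.sum_image (f := fun Q => y ^ Q.card) hinj).symm]
  have hsub : S.image Pmap ⊆ (U m).powerset.erase ∅ := by
    intro Q hQ
    rw [Finset.mem_image] at hQ
    obtain ⟨σ, hσ, rfl⟩ := hQ
    rw [hS, Finset.mem_filter, Finset.mem_erase] at hσ
    rw [Finset.mem_erase, Finset.mem_powerset]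
    refine ⟨?_, Pmap_subset_U σ⟩
    have h1 : 1 < σ.support.card := Equiv.Perm.one_lt_card_support_of_ne_one hσ.1.1
    have h2 := two_mul_cycleType_card hσ.2
    have h3 := card_Pmap hσ.2
    intro hcon
    rw [hcon, Finset.card_empty] at h3
    omega
  have hpos : ∀ Q ∈ (U m).powerset.erase ∅, Q ∉ S.image Pmap → 0 ≤ y ^ Q.card :=
    fun Q _ _ => by positivity
  refine le_trans (Finset.sum_le_sum_of_subset_of_nonneg hsub hpos) ?_
  rw [Finset.sum_erase_eq_sub (Finset.empty_mem_powerset _), sum_powerset_pow]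
  simp only [Finset.card_empty, pow_zero]
  have hN := two_mul_card_U (m := m)
  have hmm : m ≤ m * m := Nat.le_mul_of_pos_left m (by omega)
  have hcast : 2 * ((U m).card : ℝ) = (m : ℝ) ^ 2 - m := by
    have : ((2 * (U m).card : ℕ) : ℝ) = ((m * m - m : ℕ) : ℝ) := by rw [hN]
    push_cast [Nat.cast_sub hmm] at this
    nlinarith [this]
  have hNy : ((U m).card : ℝ) * y ≤ 1 / 2 := by
    have hxd : (2 : ℝ) * (m : ℝ) ^ 2 ≤ d := by exact_mod_cast hd
    have hcard : 2 * ((U m).card : ℝ) ≤ (m : ℝ) ^ 2 := by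
      have : (m : ℝ) ≥ 0 := by positivity
      nlinarith [hcast]
    rw [hy_def, mul_one_div, div_le_iff₀ hd0]
    nlinarith
  have hle := one_add_pow_le hy (U m).card hNy
  have : (y + 1) ^ (U m).card - 1 ≤ 2 * (U m).card * y := by
    rw [add_comm]
    linarith
  refine le_trans this (le_of_eq ?_)
  rw [hy_def, ← hcast]
  ring

lemma geom_sum_le_two {x : ℝ} (hx0 : 0 ≤ x) (hx : x ≤ 1 / 2) (n : ℕ) :
    ∑ i ∈ Finset.range n, x ^ i ≤ 2 := by
  have hx1 : x ≠ 1 := ne_of_lt (by linarith)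
  rw [geom_sum_eq hx1]
  have h1 : x - 1 < 0 := by linarith
  rw [div_le_iff_of_neg h1]
  have h2 : (0 : ℝ) ≤ x ^ n := by positivity
  nlinarith

lemma sum_Icc_pow_le {x : ℝ} (hx0 : 0 ≤ x) (hx : x ≤ 1 / 2) (m : ℕ) :
    ∑ j ∈ Finset.Icc 1 m, x ^ j ≤ 2 * x := by
  rw [show Finset.Icc 1 m = Finset.Ico 1 (m + 1) from by
    ext j; simp [Finset.mem_Icc, Finset.mem_Ico]]
  rw [Finset.sum_Ico_eq_sum_range]
  have h : ∀ i ∈ Finset.range (m + 1 - 1), x ^ (1 + i) = x * x ^ i := by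
    intro i _
    rw [pow_add, pow_one]
  rw [Finset.sum_congr rfl h, ← Finset.mul_sum]
  have := geom_sum_le_two hx0 hx (m + 1 - 1)
  nlinarith

lemma nonInv_exponent {σ : Equiv.Perm (Fin m)} (h1 : σ ≠ 1) (h2 : σ * σ ≠ 1) :
    σ.support.card / 2 + 1 ≤ σ.support.card - σ.cycleType.card := by
  have hord : ¬ orderOf σ ∣ 2 := by
    intro h
    exact h2 (by rw [← pow_two]; exact orderOf_dvd_iff_pow_eq_one.mp h)
  have hlcm : ¬ σ.cycleType.lcm ∣ 2 := by rwa [Equiv.Perm.lcm_cycleType]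
  have hex : ∃ p ∈ σ.cycleType, ¬ p ∣ 2 := by
    by_contra hall
    push_neg at hall
    exact hlcm (Multiset.lcm_dvd.mpr hall)
  obtain ⟨p, hp, hpd⟩ := hex
  have hp2 := Equiv.Perm.two_le_of_mem_cycleType hp
  have hp3 : 3 ≤ p := by
    rcases Nat.lt_or_ge p 3 with h | h
    · have : p = 2 := by omega
      rw [this] at hpd
      exact absurd dvd_rfl hpd
    · exact h
  obtain ⟨t, ht⟩ := Multiset.exists_cons_of_mem hp
  have htsum : 2 * Multiset.card t ≤ t.sum := by
    have h2le : ∀ a ∈ t, 2 ≤ a := by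
      intro a ha
      exact Equiv.Perm.two_le_of_mem_cycleType (by rw [ht]; exact Multiset.mem_cons_of_mem ha)
    have := Multiset.card_nsmul_le_sum h2le
    simpa [mul_comm] using this
  have hsum : σ.cycleType.sum = σ.support.card := Equiv.Perm.sum_cycleType σ
  rw [ht] at hsum
  have hcard : σ.cycleType.card = Multiset.card t + 1 := by
    rw [ht]; simp [add_comm]
  rw [Multiset.sum_cons] at hsum
  rw [hcard]
  omega

set_option maxHeartbeats 1000000 in
lemma partB (hm : 1 ≤ m) (hd : 2 * m ^ 2 ≤ d) :
    ∑ σ ∈ ((Finset.univ.erase (1 : Equiv.Perm (Fin m))).filter fun σ => ¬σ * σ = 1),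
      (1 / (d : ℝ)) ^ (σ.support.card - σ.cycleType.card)
      ≤ 4 * (m : ℝ) ^ 3 / (d : ℝ) ^ 2 := by
  have hd2 : 2 ≤ d := d_pos hm hd
  have hd2r : (2 : ℝ) ≤ d := by exact_mod_cast hd2
  have hd0 : (0 : ℝ) < d := by linarith
  have hm1 : (1 : ℝ) ≤ m := by exact_mod_cast hm
  set y : ℝ := 1 / d with hy_def
  have hy0 : 0 ≤ y := by positivity
  have hd1 : (1 : ℝ) ≤ d := by linarith
  have hy1 : y ≤ 1 := by
    rw [hy_def, div_le_one hd0]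
    linarith
  set x : ℝ := (m : ℝ) ^ 2 * y with hx_def
  have hx0 : 0 ≤ x := by positivity
  have hxd : (2 : ℝ) * (m : ℝ) ^ 2 ≤ d := by exact_mod_cast hd
  have hx : x ≤ 1 / 2 := by
    rw [hx_def, hy_def, mul_one_div, div_le_iff₀ hd0]
    linarith
  set S := ((Finset.univ.erase (1 : Equiv.Perm (Fin m))).filter fun σ => ¬σ * σ = 1) with hS
  have step1 : ∑ σ ∈ S, y ^ (σ.support.card - σ.cycleType.card)
      ≤ ∑ σ ∈ S, y ^ (σ.support.card / 2 + 1) := by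
    apply Finset.sum_le_sum
    intro σ hσ
    rw [hS, Finset.mem_filter, Finset.mem_erase] at hσ
    exact pow_le_pow_of_le_one hy0 hy1 (nonInv_exponent hσ.1.1 hσ.2)
  refine le_trans step1 ?_
  have step2 : ∑ σ ∈ S, y ^ (σ.support.card / 2 + 1)
      = ∑ k ∈ S.image (fun σ : Equiv.Perm (Fin m) => σ.support.card),
          (S.filter fun σ => σ.support.card = k).card • y ^ (k / 2 + 1) :=
    Finset.sum_comp (fun k => y ^ (k / 2 + 1)) (fun σ : Equiv.Perm (Fin m) => σ.support.card)
  rw [step2]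
  have step3 : ∑ k ∈ S.image (fun σ : Equiv.Perm (Fin m) => σ.support.card),
      (S.filter fun σ => σ.support.card = k).card • y ^ (k / 2 + 1)
      ≤ ∑ k ∈ Finset.Icc 2 m, (m : ℝ) ^ k * y ^ (k / 2 + 1) := by
    refine le_trans (Finset.sum_le_sum ?_) (Finset.sum_le_sum_of_subset_of_nonneg ?_ ?_)
    · intro k hk
      rw [nsmul_eq_mul]
      apply mul_le_mul_of_nonneg_right _ (by positivity)
      have := card_support_filter_le hm k S
      calc ((S.filter fun σ => σ.support.card = k).card : ℝ) ≤ ((m ^ k : ℕ) : ℝ) := by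
            exact_mod_cast this
        _ = (m : ℝ) ^ k := by push_cast; ring
    · intro k hk
      rw [Finset.mem_image] at hk
      obtain ⟨σ, hσ, rfl⟩ := hk
      rw [hS, Finset.mem_filter, Finset.mem_erase] at hσ
      rw [Finset.mem_Icc]
      exact ⟨Equiv.Perm.one_lt_card_support_of_ne_one hσ.1.1, support_card_le σ⟩
    · intro k _ _
      positivity
  refine le_trans step3 ?_
  have step4 : ∀ k ∈ Finset.Icc 2 m, (m : ℝ) ^ k * y ^ (k / 2 + 1)
      ≤ (m : ℝ) * x ^ (k / 2) * y := by
    intro k hk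
    have hkle : k ≤ 2 * (k / 2) + 1 := by omega
    have h1 : (m : ℝ) ^ k ≤ (m : ℝ) ^ (2 * (k / 2) + 1) := pow_le_pow_right₀ hm1 hkle
    have h2 : (m : ℝ) ^ (2 * (k / 2) + 1) = (m : ℝ) * ((m : ℝ) ^ 2) ^ (k / 2) := by
      rw [pow_succ, pow_mul]
      ring
    have h3 : y ^ (k / 2 + 1) = y ^ (k / 2) * y := pow_succ y (k / 2)
    calc (m : ℝ) ^ k * y ^ (k / 2 + 1)
        ≤ (m : ℝ) ^ (2 * (k / 2) + 1) * y ^ (k / 2 + 1) := by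
          apply mul_le_mul_of_nonneg_right h1 (by positivity)
      _ = (m : ℝ) * (((m : ℝ) ^ 2) ^ (k / 2) * y ^ (k / 2)) * y := by rw [h2, h3]; ring
      _ = (m : ℝ) * x ^ (k / 2) * y := by rw [hx_def, mul_pow]
  refine le_trans (Finset.sum_le_sum step4) ?_
  have step5 : ∑ k ∈ Finset.Icc 2 m, (m : ℝ) * x ^ (k / 2) * y
      = (m : ℝ) * y * ∑ k ∈ Finset.Icc 2 m, x ^ (k / 2) := by
    rw [Finset.mul_sum]
    apply Finset.sum_congr rfl
    intro k _
    ring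
  rw [step5]
  have step6 : ∑ k ∈ Finset.Icc 2 m, x ^ (k / 2) ≤ 2 * (2 * x) := by
    have hcomp : ∑ k ∈ Finset.Icc 2 m, x ^ (k / 2)
        = ∑ j ∈ (Finset.Icc 2 m).image (fun k => k / 2),
            ((Finset.Icc 2 m).filter fun k => k / 2 = j).card • x ^ j :=
      Finset.sum_comp (fun j => x ^ j) (fun k => k / 2)
    rw [hcomp]
    have h1 : ∑ j ∈ (Finset.Icc 2 m).image (fun k => k / 2),
        ((Finset.Icc 2 m).filter fun k => k / 2 = j).card • x ^ j
        ≤ ∑ j ∈ (Finset.Icc 2 m).image (fun k => k / 2), 2 * x ^ j := by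
      apply Finset.sum_le_sum
      intro j hj
      rw [nsmul_eq_mul]
      apply mul_le_mul_of_nonneg_right _ (by positivity)
      have hsub : ((Finset.Icc 2 m).filter fun k => k / 2 = j) ⊆ {2 * j, 2 * j + 1} := by
        intro k hk
        rw [Finset.mem_filter, Finset.mem_Icc] at hk
        simp only [Finset.mem_insert, Finset.mem_singleton]
        omega
      have := Finset.card_le_card hsub
      have hcard2 : ({2 * j, 2 * j + 1} : Finset ℕ).card ≤ 2 :=
        le_trans (Finset.card_insert_le _ _) (by simp)
      have : ((Finset.Icc 2 m).filter fun k => k / 2 = j).card ≤ 2 := le_trans this hcard2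
      exact_mod_cast this
    refine le_trans h1 ?_
    have h2 : ∑ j ∈ (Finset.Icc 2 m).image (fun k => k / 2), 2 * x ^ j
        ≤ ∑ j ∈ Finset.Icc 1 m, 2 * x ^ j := by
      apply Finset.sum_le_sum_of_subset_of_nonneg
      · intro j hj
        rw [Finset.mem_image] at hj
        obtain ⟨k, hk, rfl⟩ := hj
        rw [Finset.mem_Icc] at hk ⊢
        omega
      · intro j _ _
        positivity
    refine le_trans h2 ?_
    rw [← Finset.mul_sum]
    have := sum_Icc_pow_le hx0 hx m
    linarith
  have hfinal : (m : ℝ) * y * (2 * (2 * x)) = 4 * (m : ℝ) ^ 3 / (d : ℝ) ^ 2 := by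
    rw [hx_def, hy_def]
    field_simp
    ring
  calc (m : ℝ) * y * ∑ k ∈ Finset.Icc 2 m, x ^ (k / 2)
      ≤ (m : ℝ) * y * (2 * (2 * x)) := by
        apply mul_le_mul_of_nonneg_left step6 (by positivity)
    _ = 4 * (m : ℝ) ^ 3 / (d : ℝ) ^ 2 := hfinal

/-! ### The normalized Gram matrix and `eps` -/

noncomputable def Bmat (d m : ℕ) :
    Matrix (Equiv.Perm (Fin m)) (Equiv.Perm (Fin m)) ℝ :=
  fun σ τ => (d : ℝ) ^ cycleCount (σ * τ⁻¹) / (d : ℝ) ^ m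

noncomputable def eps (m d : ℕ) : ℝ :=
  ∑ σ ∈ Finset.univ.erase (1 : Equiv.Perm (Fin m)), (d : ℝ) ^ cycleCount σ / (d : ℝ) ^ m

lemma Bmat_diag (hd0 : (d : ℝ) ≠ 0) (σ : Equiv.Perm (Fin m)) : Bmat d m σ σ = 1 := by
  rw [Bmat, mul_inv_cancel, cycleCount_one]
  exact div_self (pow_ne_zero _ hd0)

lemma Bmat_nonneg (σ τ : Equiv.Perm (Fin m)) : 0 ≤ Bmat d m σ τ := by
  rw [Bmat]
  have : (0:ℝ) ≤ (d:ℝ) := Nat.cast_nonneg d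
  positivity

lemma eps_nonneg : 0 ≤ eps m d := by
  apply Finset.sum_nonneg
  intro σ _
  have : (0:ℝ) ≤ (d:ℝ) := Nat.cast_nonneg d
  positivity

lemma row_sum (σ : Equiv.Perm (Fin m)) :
    ∑ τ ∈ Finset.univ.erase σ, Bmat d m σ τ = eps m d := by
  rw [eps]
  apply Finset.sum_bij (fun τ _ => σ * τ⁻¹)
  · intro τ hτ
    rw [Finset.mem_erase] at hτ ⊢
    exact ⟨fun hcon => hτ.1 (mul_inv_eq_one.mp hcon).symm, Finset.mem_univ _⟩
  · intro τ₁ h₁ τ₂ h₂ h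
    exact inv_injective (mul_left_cancel h)
  · intro π hπ
    rw [Finset.mem_erase] at hπ
    refine ⟨π⁻¹ * σ, ?_, ?_⟩
    · rw [Finset.mem_erase]
      refine ⟨?_, Finset.mem_univ _⟩
      intro hcon
      exact hπ.1 (by simpa using inv_eq_one.mp (mul_eq_right.mp hcon))
    · rw [mul_inv_rev, inv_inv, ← mul_assoc, mul_inv_cancel, one_mul]
  · intro τ hτ
    rfl

lemma term_eq (hd0 : (d : ℝ) ≠ 0) (σ : Equiv.Perm (Fin m)) :
    (d : ℝ) ^ cycleCount σ / (d : ℝ) ^ m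
      = (1 / (d : ℝ)) ^ (σ.support.card - σ.cycleType.card) := by
  have hsupp := support_card_le σ
  have hcyc : σ.cycleType.card ≤ σ.support.card := by
    have := two_mul_card_cycleType_le σ; omega
  have key : (d : ℝ) ^ σ.cycleType.card * (d : ℝ) ^ (m - σ.support.card)
      * (d : ℝ) ^ (σ.support.card - σ.cycleType.card) = (d : ℝ) ^ m := by
    rw [← pow_add, ← pow_add]
    congr 1
    omega
  rw [cycleCount_eq, pow_add, one_div, inv_pow, inv_eq_one_div,
    eq_div_iff (pow_ne_zero _ hd0), div_mul_eq_mul_div, key]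
  exact div_self (pow_ne_zero _ hd0)

/-! ### Bounding eps -/

lemma eps_le (hm : 1 ≤ m) (hd : 2 * m ^ 2 ≤ d) :
    eps m d ≤ 3 / 2 * ((m : ℝ) ^ 2 / d) ∧ eps m d ≤ 3 / 4 := by
  have hd2 : 2 ≤ d := d_pos hm hd
  have hd2r : (2 : ℝ) ≤ d := by exact_mod_cast hd2
  have hd0 : (0 : ℝ) < d := by linarith
  have hdne : (d : ℝ) ≠ 0 := ne_of_gt hd0
  rcases eq_or_lt_of_le hm with h1 | h2
  · -- m = 1
    subst h1
    have hempty : (Finset.univ.erase (1 : Equiv.Perm (Fin 1))) = ∅ := by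
      apply Finset.eq_empty_of_forall_notMem
      intro σ hσ
      rw [Finset.mem_erase] at hσ
      exact hσ.1 (Equiv.ext fun x => Subsingleton.elim _ _)
    have hz : eps 1 d = 0 := by rw [eps, hempty, Finset.sum_empty]
    rw [hz]
    constructor
    · positivity
    · norm_num
  · -- 2 ≤ m
    have hm2 : (2 : ℝ) ≤ m := by exact_mod_cast h2
    have hsplit : eps m d
        = (∑ σ ∈ ((Finset.univ.erase (1 : Equiv.Perm (Fin m))).filter fun σ => σ * σ = 1),
            (1 / (d : ℝ)) ^ (σ.support.card - σ.cycleType.card))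
        + ∑ σ ∈ ((Finset.univ.erase (1 : Equiv.Perm (Fin m))).filter fun σ => ¬σ * σ = 1),
            (1 / (d : ℝ)) ^ (σ.support.card - σ.cycleType.card) := by
      rw [eps, Finset.sum_congr rfl (fun σ _ => term_eq hdne σ)]
      exact (Finset.sum_filter_add_sum_filter_not _ _ _).symm
    have hA := partA hm hd
    have hB := partB hm hd
    have hxd : (2 : ℝ) * (m : ℝ) ^ 2 ≤ d := by exact_mod_cast hd
    have e1 : 4*(m:ℝ)^3/(d:ℝ)^2 ≤ 2*(m:ℝ)/d := by
      rw [div_le_div_iff₀ (by positivity) hd0]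
      nlinarith [mul_nonneg (mul_nonneg (by positivity : (0:ℝ) ≤ 2*(m:ℝ)) (le_of_lt hd0))
        (by linarith : (0:ℝ) ≤ (d:ℝ) - 2*(m:ℝ)^2)]
    have hkey : eps m d ≤ 3/2 * ((m:ℝ)^2/d) := by
      rw [hsplit]
      calc _ ≤ ((m:ℝ)^2 - m)/d + 2*(m:ℝ)/d := by
            refine add_le_add (le_trans hA le_rfl) (le_trans hB e1)
        _ = ((m:ℝ)^2 + m)/d := by ring
        _ ≤ (3/2*(m:ℝ)^2)/d := by
            gcongr
            nlinarith
        _ = 3/2*((m:ℝ)^2/d) := by ring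
    have hhalf : (m:ℝ)^2/d ≤ 1/2 := by
      rw [div_le_iff₀ hd0]
      linarith
    exact ⟨hkey, by nlinarith⟩

/-! ### Matrix part -/

set_option maxHeartbeats 1000000 in
lemma main_bound (hm : 1 ≤ m) (hd : 2 * m ^ 2 ≤ d) :
    |(∑ β : Equiv.Perm (Fin m), (d : ℝ) ^ m * |weingarten d m 1 β|) - 1|
      ≤ 6 * ((m : ℝ) ^ 2 / d) := by
  classical
  have hd2 : 2 ≤ d := d_pos hm hd
  have hd2r : (2 : ℝ) ≤ d := by exact_mod_cast hd2
  have hd0 : (0 : ℝ) < d := by linarith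
  have hdne : (d : ℝ) ≠ 0 := ne_of_gt hd0
  have hcne : ((d : ℝ) ^ m) ≠ 0 := pow_ne_zero _ hdne
  obtain ⟨hε1, hε2⟩ := eps_le hm hd
  have hε0 : (0 : ℝ) ≤ eps m d := eps_nonneg
  set B := Bmat d m with hBdef
  have habsE : ∀ σ τ : Equiv.Perm (Fin m),
      |B σ τ - (1 : Matrix (Equiv.Perm (Fin m)) (Equiv.Perm (Fin m)) ℝ) σ τ|
        = if τ = σ then 0 else B σ τ := by
    intro σ τ
    by_cases h : τ = σ
    · subst h
      rw [if_pos rfl, Matrix.one_apply_eq, hBdef, Bmat_diag hdne, sub_self, abs_zero]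
    · rw [if_neg h, Matrix.one_apply_ne (Ne.symm h), sub_zero,
        abs_of_nonneg (Bmat_nonneg _ _)]
  have hrowE : ∀ σ : Equiv.Perm (Fin m),
      ∑ τ, |B σ τ - (1 : Matrix (Equiv.Perm (Fin m)) (Equiv.Perm (Fin m)) ℝ) σ τ|
        = eps m d := by
    intro σ
    rw [Finset.sum_congr rfl (fun τ _ => habsE σ τ),
      ← Finset.add_sum_erase _ _ (Finset.mem_univ σ), if_pos rfl, zero_add,
      Finset.sum_congr rfl (fun τ hτ => if_neg (Finset.mem_erase.mp hτ).1)]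
    exact row_sum σ
  have hEnn : ∀ σ τ : Equiv.Perm (Fin m),
      (0:ℝ) ≤ |B σ τ - (1 : Matrix (Equiv.Perm (Fin m)) (Equiv.Perm (Fin m)) ℝ) σ τ| :=
    fun σ τ => abs_nonneg _
  -- invertibility
  have hdet : IsUnit B.det := by
    by_contra hdet
    rw [isUnit_iff_ne_zero, not_not] at hdet
    obtain ⟨v, hv0, hBv⟩ := Matrix.exists_mulVec_eq_zero_iff.mpr hdet
    obtain ⟨i, -, hmax⟩ := Finset.exists_max_image Finset.univ (fun j => |v j|)
      ⟨1, Finset.mem_univ 1⟩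
    have hvi : 0 < |v i| := by
      rcases Function.ne_iff.mp hv0 with ⟨j, hj⟩
      exact lt_of_lt_of_le (abs_pos.mpr hj) (hmax j (Finset.mem_univ j))
    have hrow : ∑ τ, B i τ * v τ = 0 := by
      have := congrFun hBv i
      simpa [Matrix.mulVec, dotProduct] using this
    rw [← Finset.add_sum_erase _ _ (Finset.mem_univ i), hBdef, Bmat_diag hdne, one_mul]
      at hrow
    have hvi_eq : v i = -∑ τ ∈ Finset.univ.erase i, Bmat d m i τ * v τ := by linarith
    have habs_eq : |v i| = |∑ τ ∈ Finset.univ.erase i, Bmat d m i τ * v τ| := by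
      rw [hvi_eq, abs_neg]
    have hbound : |∑ τ ∈ Finset.univ.erase i, Bmat d m i τ * v τ| ≤ eps m d * |v i| := by
      calc |∑ τ ∈ Finset.univ.erase i, Bmat d m i τ * v τ|
          ≤ ∑ τ ∈ Finset.univ.erase i, |Bmat d m i τ * v τ| :=
            Finset.abs_sum_le_sum_abs _ _
        _ ≤ ∑ τ ∈ Finset.univ.erase i, Bmat d m i τ * |v i| := by
            apply Finset.sum_le_sum
            intro τ _
            rw [abs_mul, abs_of_nonneg (Bmat_nonneg _ _)]
            exact mul_le_mul_of_nonneg_left (hmax τ (Finset.mem_univ τ)) (Bmat_nonneg _ _)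
        _ = eps m d * |v i| := by rw [← Finset.sum_mul, row_sum i]
    rw [← habs_eq] at hbound
    nlinarith
  set W := B⁻¹ with hWdef
  have hBW : B * W = 1 := Matrix.mul_nonsing_inv B hdet
  -- the recursion identity
  set E := B - 1 with hEdef
  have hMid : W - 1 = -(E * (W - 1)) - E := by
    have h1 : E * W = 1 - W := by
      rw [hEdef, Matrix.sub_mul, Matrix.one_mul, hBW]
    have h2 : E * (W - 1) = E * W - E := by
      rw [Matrix.mul_sub, Matrix.mul_one]
    rw [h2, h1]
    abel
  have hEntry : ∀ σ β : Equiv.Perm (Fin m),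
      (W - 1) σ β = -(∑ γ, E σ γ * (W - 1) γ β) - E σ β := by
    intro σ β
    have h := congrFun (congrFun hMid σ) β
    have h2 : (-(E * (W - 1)) - E) σ β = -(∑ γ, E σ γ * (W - 1) γ β) - E σ β := by
      simp only [Matrix.sub_apply, Matrix.neg_apply, Matrix.mul_apply]
    rw [← h2, ← h]
  -- the row-sum function
  set r : Equiv.Perm (Fin m) → ℝ := fun σ => ∑ β, |(W - 1) σ β| with hrdef
  have hr0 : ∀ σ, 0 ≤ r σ := fun σ => Finset.sum_nonneg fun β _ => abs_nonneg _
  obtain ⟨σs, -, hmaxr⟩ := Finset.exists_max_image Finset.univ r ⟨1, Finset.mem_univ 1⟩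
  have hrec : r σs ≤ eps m d + eps m d * r σs := by
    calc r σs = ∑ β, |(W - 1) σs β| := rfl
      _ ≤ ∑ β, (|E σs β| + ∑ γ, |E σs γ| * |(W - 1) γ β|) := by
          apply Finset.sum_le_sum
          intro β _
          rw [hEntry σs β]
          calc |(-(∑ γ, E σs γ * (W - 1) γ β) - E σs β)|
              ≤ |(-(∑ γ, E σs γ * (W - 1) γ β))| + |E σs β| := abs_sub _ _
            _ = |∑ γ, E σs γ * (W - 1) γ β| + |E σs β| := by rw [abs_neg]
            _ ≤ (∑ γ, |E σs γ * (W - 1) γ β|) + |E σs β| := by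
                exact add_le_add_left (Finset.abs_sum_le_sum_abs _ _) _
            _ = (∑ γ, |E σs γ| * |(W - 1) γ β|) + |E σs β| := by
                rw [Finset.sum_congr rfl fun γ _ => abs_mul _ _]
            _ = |E σs β| + ∑ γ, |E σs γ| * |(W - 1) γ β| := by ring
      _ = (∑ β, |E σs β|) + ∑ β, ∑ γ, |E σs γ| * |(W - 1) γ β| := Finset.sum_add_distrib
      _ = eps m d + ∑ γ, |E σs γ| * r γ := by
          rw [show (∑ β, |E σs β|) = eps m d from by
            rw [← hrowE σs]
            apply Finset.sum_congr rfl
            intro β _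
            rw [hEdef, Matrix.sub_apply]]
          rw [Finset.sum_comm]
          congr 1
          apply Finset.sum_congr rfl
          intro γ _
          rw [hrdef, Finset.mul_sum]
      _ ≤ eps m d + ∑ γ, |E σs γ| * r σs := by
          apply add_le_add_right
          apply Finset.sum_le_sum
          intro γ _
          exact mul_le_mul_of_nonneg_left (hmaxr γ (Finset.mem_univ γ)) (abs_nonneg _)
      _ = eps m d + eps m d * r σs := by
          rw [← Finset.sum_mul]
          congr 2
          rw [← hrowE σs]
          apply Finset.sum_congr rfl
          intro γ _
          rw [hEdef, Matrix.sub_apply]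
  have hrs : r σs ≤ 4 * eps m d := by nlinarith [hr0 σs]
  -- identify the inverse
  have hA : gramMatrix d m = ((d : ℝ) ^ m) • B := by
    funext σ τ
    rw [Matrix.smul_apply, hBdef, smul_eq_mul]
    rw [show Bmat d m σ τ = (d : ℝ) ^ cycleCount (σ * τ⁻¹) / (d : ℝ) ^ m from rfl]
    rw [show gramMatrix d m σ τ = (d : ℝ) ^ cycleCount (σ * τ⁻¹) from rfl]
    field_simp
  have hright : gramMatrix d m * (((d : ℝ) ^ m)⁻¹ • W) = 1 := by
    rw [hA, Matrix.smul_mul, Matrix.mul_smul, smul_smul, mul_inv_cancel₀ hcne, one_smul,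
      hBW]
  have hinv : weingarten d m = ((d : ℝ) ^ m)⁻¹ • W := by
    rw [weingarten]
    exact Matrix.inv_eq_right_inv hright
  have hterm : ∀ β : Equiv.Perm (Fin m),
      (d : ℝ) ^ m * |weingarten d m 1 β| = |W 1 β| := by
    intro β
    rw [hinv, Matrix.smul_apply, smul_eq_mul, abs_mul, abs_inv,
      abs_of_nonneg (by positivity : (0:ℝ) ≤ (d : ℝ) ^ m)]
    field_simp
  rw [Finset.sum_congr rfl (fun β _ => hterm β)]
  have hone : ∑ β, |(1 : Matrix (Equiv.Perm (Fin m)) (Equiv.Perm (Fin m)) ℝ) 1 β| = 1 := by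
    simp [Matrix.one_apply, apply_ite abs, abs_zero, abs_one]
  have hfin : |(∑ β, |W 1 β|) - 1| ≤ r 1 := by
    rw [← hone, ← Finset.sum_sub_distrib]
    calc |∑ β, (|W 1 β| - |(1 : Matrix (Equiv.Perm (Fin m)) (Equiv.Perm (Fin m)) ℝ) 1 β|)|
        ≤ ∑ β, |(|W 1 β| - |(1 : Matrix (Equiv.Perm (Fin m)) (Equiv.Perm (Fin m)) ℝ) 1 β|)| :=
          Finset.abs_sum_le_sum_abs _ _
      _ ≤ ∑ β, |W 1 β - (1 : Matrix (Equiv.Perm (Fin m)) (Equiv.Perm (Fin m)) ℝ) 1 β| := by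
          apply Finset.sum_le_sum
          intro β _
          exact abs_abs_sub_abs_le_abs_sub _ _
      _ = r 1 := by
          rw [hrdef]
          apply Finset.sum_congr rfl
          intro β _
          rw [Matrix.sub_apply]
  calc |(∑ β, |W 1 β|) - 1| ≤ r 1 := hfin
    _ ≤ r σs := hmaxr 1 (Finset.mem_univ 1)
    _ ≤ 4 * eps m d := hrs
    _ ≤ 6 * ((m : ℝ) ^ 2 / d) := by linarith

end Wg

/-- Total absolute Weingarten mass: there is a constant `C > 0` such that for all
`m ≥ 1` and `d ≥ 2m²`, `|∑_{β ∈ S_m} d^m |Wg_d(e,β)| − 1| ≤ C m²/d`. -/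
theorem weingarten_abs_sum :
    ∃ C : ℝ, 0 < C ∧ ∀ m d : ℕ, 1 ≤ m → 2 * m ^ 2 ≤ d →
      |(∑ β : Equiv.Perm (Fin m), (d : ℝ) ^ m * |weingarten d m 1 β|) - 1|
        ≤ C * (m : ℝ) ^ 2 / (d : ℝ) := by
  refine ⟨6, by norm_num, ?_⟩
  intro m d hm hd
  have h := Wg.main_bound hm hd
  calc |(∑ β : Equiv.Perm (Fin m), (d : ℝ) ^ m * |weingarten d m 1 β|) - 1|
      ≤ 6 * ((m : ℝ) ^ 2 / (d : ℝ)) := h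
    _ = 6 * (m : ℝ) ^ 2 / (d : ℝ) := by ring
end

section
/- Let q ≥ 1 and m ≥ 1 be natural numbers and let μ be the uniform (rotation-invariant) probability measure on the unit sphere of ℂ^q. Then the m-th moment operator of the Haar-random state ensemble equals ((q-1)!/(q+m-1)!) times the sum of all replica permutation matrices: entrywise, for all f, g : Fin m → Fin q, ∫ ∏_{k=1}^{m} ψ(f(k)) · conj(ψ(g(k))) dμ(ψ) = ((q-1)!/(q+m-1)!) · #{σ ∈ S_m : ∀ k, f(k) = g(σ(k))}. -/
open MeasureTheory Finset

namespace HaarMoment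

variable {q : ℕ}

/-- The master integrand: `∏ i, ψ i ^ a i * conj (ψ i) ^ b i`. -/
def phi (a b : Fin q → ℕ) (ψ : Fin q → ℂ) : ℂ :=
  ∏ i, ψ i ^ a i * (starRingEnd ℂ) (ψ i) ^ b i

lemma continuous_phi (a b : Fin q → ℕ) : Continuous (phi a b) := by
  unfold phi
  exact continuous_finset_prod _ fun i _ =>
    ((continuous_apply i).pow _).mul ((continuous_star.comp (continuous_apply i)).pow _)

lemma phi_bound (a b : Fin q → ℕ) {ψ : Fin q → ℂ}
    (hψ : ∑ i, Complex.normSq (ψ i) = 1) : ‖phi a b ψ‖ ≤ 1 := by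
  have h1 : ∀ i : Fin q, ‖ψ i‖ ≤ 1 := by
    intro i
    have h2 : Complex.normSq (ψ i) ≤ 1 := by
      rw [← hψ]
      exact Finset.single_le_sum (f := fun i => Complex.normSq (ψ i))
        (fun j _ => Complex.normSq_nonneg _) (mem_univ i)
    nlinarith [norm_nonneg (ψ i), Complex.sq_norm (ψ i), Complex.normSq_eq_norm_sq (ψ i)]
  unfold phi
  calc ‖∏ i, ψ i ^ a i * (starRingEnd ℂ) (ψ i) ^ b i‖
      = ∏ i, ‖ψ i ^ a i * (starRingEnd ℂ) (ψ i) ^ b i‖ := by rw [norm_prod]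
    _ ≤ ∏ i, 1 := by
        refine Finset.prod_le_prod (fun i _ => norm_nonneg _) fun i _ => ?_
        rw [norm_mul, norm_pow, norm_pow, RingHomIsometric.norm_map]
        exact mul_le_one₀ (pow_le_one₀ (norm_nonneg _) (h1 i)) (by positivity)
          (pow_le_one₀ (norm_nonneg _) (h1 i))
    _ = 1 := by simp

variable (μ : Measure (Fin q → ℂ)) [IsProbabilityMeasure μ]

lemma ae_sphere (hsphere : μ {ψ : Fin q → ℂ | ∑ i, Complex.normSq (ψ i) = 1}ᶜ = 0) :
    ∀ᵐ ψ ∂μ, ∑ i, Complex.normSq (ψ i) = 1 := by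
  rw [ae_iff]
  convert hsphere using 2
  rfl

lemma integrable_phi (hsphere : μ {ψ : Fin q → ℂ | ∑ i, Complex.normSq (ψ i) = 1}ᶜ = 0)
    (a b : Fin q → ℕ) : Integrable (phi a b) μ := by
  refine Integrable.mono' (integrable_const 1) (continuous_phi a b).aestronglyMeasurable ?_
  filter_upwards [ae_sphere μ hsphere] with ψ hψ
  exact phi_bound a b hψ

lemma continuous_mulVec (M : Matrix (Fin q) (Fin q) ℂ) : Continuous (M.mulVec) := by
  refine continuous_pi fun k => ?_
  simp only [Matrix.mulVec, dotProduct]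
  exact continuous_finset_sum _ fun b _ => continuous_const.mul (continuous_apply b)

lemma integral_comp_unitary
    (hinv : ∀ U : Matrix.unitaryGroup (Fin q) ℂ,
      μ.map (fun ψ => (U : Matrix (Fin q) (Fin q) ℂ).mulVec ψ) = μ)
    (U : Matrix.unitaryGroup (Fin q) ℂ) (h : (Fin q → ℂ) → ℂ) (hc : Continuous h) :
    ∫ ψ, h ((U : Matrix (Fin q) (Fin q) ℂ).mulVec ψ) ∂μ = ∫ ψ, h ψ ∂μ := by
  conv_rhs => rw [← hinv U]
  rw [integral_map ((continuous_mulVec _).aemeasurable) ]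
  rw [hinv U]
  exact hc.aestronglyMeasurable

lemma phase_scale (hinv : ∀ U : Matrix.unitaryGroup (Fin q) ℂ,
      μ.map (fun ψ => (U : Matrix (Fin q) (Fin q) ℂ).mulVec ψ) = μ) (a b : Fin q → ℕ) (j : Fin q) (z : ℂ) (hz : Complex.normSq z = 1) :
    ∫ ψ, phi a b ψ ∂μ
      = z ^ a j * (starRingEnd ℂ) z ^ b j * ∫ ψ, phi a b ψ ∂μ := by
  classical
  set d : Fin q → ℂ := fun i => if i = j then z else 1 with hd
  have hdz : d * star d = 1 := by
    funext i
    simp only [Pi.mul_apply, Pi.star_apply, Pi.one_apply, hd]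
    by_cases h : i = j
    · simp [h, ← Complex.normSq_eq_conj_mul_self]
      rw [mul_comm, ← Complex.normSq_eq_conj_mul_self, hz]; rfl
    · simp [h]
  have hU : Matrix.diagonal d ∈ Matrix.unitaryGroup (Fin q) ℂ := by
    rw [Matrix.mem_unitaryGroup_iff]
    rw [Matrix.star_eq_conjTranspose, Matrix.diagonal_conjTranspose,
      Matrix.diagonal_mul_diagonal]
    have h1 : (fun i => d i * star d i) = (1 : Fin q → ℂ) := hdz
    rw [h1]
    exact Matrix.diagonal_one
  have key := integral_comp_unitary μ hinv ⟨Matrix.diagonal d, hU⟩ (phi a b)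
    (continuous_phi a b)
  have hpt : ∀ ψ : Fin q → ℂ,
      phi a b ((Matrix.diagonal d).mulVec ψ)
        = z ^ a j * (starRingEnd ℂ) z ^ b j * phi a b ψ := by
    intro ψ
    unfold phi
    have h1 : ∀ i : Fin q, ((Matrix.diagonal d).mulVec ψ) i = d i * ψ i :=
      fun i => Matrix.mulVec_diagonal d ψ i
    calc ∏ i, ((Matrix.diagonal d).mulVec ψ) i ^ a i
          * (starRingEnd ℂ) (((Matrix.diagonal d).mulVec ψ) i) ^ b i
        = ∏ i, (d i ^ a i * (starRingEnd ℂ) (d i) ^ b i)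
            * (ψ i ^ a i * (starRingEnd ℂ) (ψ i) ^ b i) := by
          refine Finset.prod_congr rfl fun i _ => ?_
          rw [h1 i, map_mul, mul_pow, mul_pow]; ring
      _ = (∏ i, d i ^ a i * (starRingEnd ℂ) (d i) ^ b i) * phi a b ψ := by
          rw [Finset.prod_mul_distrib]; rfl
      _ = z ^ a j * (starRingEnd ℂ) z ^ b j * phi a b ψ := by
          congr 1
          have : ∀ i : Fin q, d i ^ a i * (starRingEnd ℂ) (d i) ^ b i
              = if i = j then z ^ a i * (starRingEnd ℂ) z ^ b i else 1 := by
            intro i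
            by_cases h : i = j <;> simp [hd, h]
          rw [Finset.prod_congr rfl fun i _ => this i, Finset.prod_ite_eq' Finset.univ j
            (fun i => z ^ a i * (starRingEnd ℂ) z ^ b i)]
          simp
  calc ∫ ψ, phi a b ψ ∂μ
      = ∫ ψ, phi a b ((Matrix.diagonal d).mulVec ψ) ∂μ := key.symm
    _ = ∫ ψ, z ^ a j * (starRingEnd ℂ) z ^ b j * phi a b ψ ∂μ :=
        integral_congr_ae (Filter.Eventually.of_forall hpt)
    _ = z ^ a j * (starRingEnd ℂ) z ^ b j * ∫ ψ, phi a b ψ ∂μ := integral_const_mul _ _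

lemma phase_zero (hinv : ∀ U : Matrix.unitaryGroup (Fin q) ℂ,
      μ.map (fun ψ => (U : Matrix (Fin q) (Fin q) ℂ).mulVec ψ) = μ) (a b : Fin q → ℕ) (j : Fin q) (hab : a j ≠ b j) :
    ∫ ψ, phi a b ψ ∂μ = 0 := by
  set n := a j
  set k := b j
  set θ : ℝ := Real.pi / (n + k + 1) with hθ
  have hθpos : 0 < θ := by
    apply div_pos Real.pi_pos
    positivity
  set z : ℂ := Complex.exp (θ * Complex.I) with hz
  have hnz : Complex.normSq z = 1 := by
    have : ‖z‖ = 1 := Complex.norm_exp_ofReal_mul_I θ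
    rw [← Complex.sq_norm, this, one_pow]
  have key := phase_scale μ hinv a b j z hnz
  have hzc : (starRingEnd ℂ) z = Complex.exp (-(θ * Complex.I)) := by
    rw [hz, ← Complex.exp_conj, map_mul, Complex.conj_ofReal, Complex.conj_I]
    ring_nf
  have hpow : z ^ n * (starRingEnd ℂ) z ^ k
      = Complex.exp ((((n : ℝ) - k) * θ) * Complex.I) := by
    rw [hzc, ← Complex.exp_nat_mul, ← Complex.exp_nat_mul, ← Complex.exp_add]
    congr 1
    push_cast
    ring
  have hne : z ^ n * (starRingEnd ℂ) z ^ k ≠ 1 := by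
    rw [hpow]
    intro hcon
    rw [Complex.exp_eq_one_iff] at hcon
    obtain ⟨mm, hmm⟩ := hcon
    have hre : ((n : ℝ) - k) * θ = mm * (2 * Real.pi) := by
      have h3 : ((((n : ℝ) - k) * θ : ℝ) : ℂ) * Complex.I
          = ((mm * (2 * Real.pi) : ℝ) : ℂ) * Complex.I := by
        push_cast
        push_cast at hmm
        rw [mul_assoc] at hmm ⊢
        rw [hmm]; ring
      have h4 := mul_right_cancel₀ Complex.I_ne_zero h3
      exact_mod_cast h4
    have habs : |((n : ℝ) - k) * θ| < 2 * Real.pi := by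
      rw [abs_mul, abs_of_pos hθpos, hθ]
      rw [div_eq_mul_inv, ← mul_assoc]
      have h1 : |(n : ℝ) - k| < (n : ℝ) + k + 1 := by
        rw [abs_sub_lt_iff]
        constructor <;> [skip; skip] <;> push_cast <;> nlinarith [Nat.cast_nonneg (α := ℝ) n, Nat.cast_nonneg (α := ℝ) k]
      calc |(n:ℝ) - k| * Real.pi * ((n:ℝ) + k + 1)⁻¹
          = |(n:ℝ) - k| * ((n:ℝ) + k + 1)⁻¹ * Real.pi := by ring
        _ < 1 * Real.pi := by
            apply mul_lt_mul_of_pos_right _ Real.pi_pos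
            rw [mul_inv_lt_iff₀ (by positivity), one_mul]
            exact h1
        _ < 2 * Real.pi := by nlinarith [Real.pi_pos]
    have hmm0 : mm = 0 := by
      by_contra hmm0
      have : (1 : ℝ) ≤ |(mm : ℝ)| := by
        rw [← Int.cast_abs]
        exact_mod_cast Int.one_le_abs (by exact_mod_cast hmm0)
      rw [hre, abs_mul, abs_of_pos (by positivity : (0:ℝ) < 2 * Real.pi)] at habs
      nlinarith [Real.pi_pos]
    rw [hmm0] at hre
    simp at hre
    rcases hre with h | h
    · have : (n : ℝ) = k := by linarith
      exact hab (by exact_mod_cast this)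
    · exact absurd h (ne_of_gt hθpos)
  have h2 : (1 - z ^ n * (starRingEnd ℂ) z ^ k) * ∫ ψ, phi a b ψ ∂μ = 0 := by
    rw [sub_mul, one_mul, ← key, sub_self]
  rcases mul_eq_zero.mp h2 with h | h
  · exact absurd (by rwa [sub_eq_zero, eq_comm] at h) hne
  · exact h


/-! ### Rotation matrices -/

def rot (i j : Fin q) (α β : ℝ) : Matrix (Fin q) (Fin q) ℂ := fun x y =>
  if x = i then (if y = i then (α:ℂ) else if y = j then (β:ℂ) else 0)
  else if x = j then (if y = i then -(β:ℂ) else if y = j then (α:ℂ) else 0)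
  else if x = y then 1 else 0

lemma rot_mem {i j : Fin q} (hij : i ≠ j) {α β : ℝ} (hαβ : α^2 + β^2 = 1) :
    rot i j α β ∈ Matrix.unitaryGroup (Fin q) ℂ := by
  have hαβ' : (α:ℂ)^2 + (β:ℂ)^2 = 1 := by
    have := congrArg (fun r : ℝ => (r:ℂ)) hαβ
    push_cast at this
    simpa using this
  rw [Matrix.mem_unitaryGroup_iff]
  ext x y
  rw [Matrix.mul_apply]
  simp only [Matrix.star_eq_conjTranspose, Matrix.conjTranspose_apply]
  rcases eq_or_ne i x with h | hx'
  · subst h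
    rw [Finset.sum_eq_add_of_mem i j (Finset.mem_univ i) (Finset.mem_univ j) hij
      (fun k _ hk => by simp [rot, hk.1, hk.2])]
    rcases eq_or_ne i y with h | hy'
    · subst h
      simp only [rot, if_pos rfl, if_neg hij, if_neg (Ne.symm hij), if_true,
        eq_self_iff_true, RCLike.star_def, Complex.conj_ofReal, Matrix.one_apply_eq]
      linear_combination hαβ'
    · have hy := Ne.symm hy'
      rcases eq_or_ne j y with h | hy2'
      · subst h
        rw [Matrix.one_apply_ne hy']
        simp only [rot, if_pos rfl, if_neg hij, if_neg (Ne.symm hij), if_true,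
          eq_self_iff_true, RCLike.star_def, Complex.conj_ofReal, map_neg]
        ring
      · have hy2 := Ne.symm hy2'
        rw [Matrix.one_apply_ne hy']
        simp [rot, if_neg hy, if_neg hy2, if_neg (Ne.symm hij)]
  · have hx := Ne.symm hx'
    rcases eq_or_ne j x with h | hx2'
    · subst h
      rw [Finset.sum_eq_add_of_mem i j (Finset.mem_univ i) (Finset.mem_univ j) hij
        (fun k _ hk => by simp [rot, hx, hk.1, hk.2])]
      rcases eq_or_ne i y with h | hy'
      · subst h
        rw [Matrix.one_apply_ne hx]
        simp only [rot, if_pos rfl, if_neg hij, if_neg (Ne.symm hij), if_true,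
          eq_self_iff_true, RCLike.star_def, Complex.conj_ofReal, map_neg]
        ring
      · have hy := Ne.symm hy'
        rcases eq_or_ne j y with h | hy2'
        · subst h
          simp only [rot, if_pos rfl, if_neg hij, if_neg (Ne.symm hij), if_true,
            eq_self_iff_true, RCLike.star_def, Complex.conj_ofReal, map_neg,
            Matrix.one_apply_eq]
          linear_combination hαβ'
        · have hy2 := Ne.symm hy2'
          rw [Matrix.one_apply_ne (Ne.symm hy2)]
          simp [rot, if_neg hy, if_neg hy2, if_neg (Ne.symm hij), hx]
    · have hx2 := Ne.symm hx2'
      rw [Finset.sum_eq_single_of_mem x (Finset.mem_univ x)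
        (fun k _ hk => by simp [rot, hx, hx2, Ne.symm hk])]
      rcases eq_or_ne i y with h | hy'
      · subst h
        rw [Matrix.one_apply_ne hx]
        simp [rot, hx, hx2, hij]
      · have hy := Ne.symm hy'
        rcases eq_or_ne j y with h | hy2'
        · subst h
          rw [Matrix.one_apply_ne hx2]
          simp [rot, hx, hx2, Ne.symm hij]
        · have hy2 := Ne.symm hy2'
          rcases eq_or_ne x y with h | hxy
          · subst h
            simp [rot, hx, hx2, Matrix.one_apply_eq]
          · rw [Matrix.one_apply_ne hxy]
            simp [rot, hx, hx2, hy, hy2, Ne.symm hxy]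

lemma rot_mulVec {i j : Fin q} (hij : i ≠ j) (α β : ℝ) (ψ : Fin q → ℂ) (x : Fin q) :
    (rot i j α β).mulVec ψ x
      = if x = i then (α:ℂ) * ψ i + (β:ℂ) * ψ j
        else if x = j then -(β:ℂ) * ψ i + (α:ℂ) * ψ j else ψ x := by
  rw [Matrix.mulVec, dotProduct]
  by_cases hx : x = i
  · rw [Finset.sum_eq_add_of_mem i j (Finset.mem_univ i) (Finset.mem_univ j) hij
      (fun k _ hk => by simp [rot, hx, hk.1, hk.2])]
    simp [rot, hx, hij, Ne.symm hij]
  · by_cases hx2 : x = j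
    · rw [Finset.sum_eq_add_of_mem i j (Finset.mem_univ i) (Finset.mem_univ j) hij
        (fun k _ hk => by simp [rot, hx, hx2, hk.1, hk.2])]
      simp [rot, hx, hx2, hij, Ne.symm hij]
    · rw [Finset.sum_eq_single_of_mem x (Finset.mem_univ x)
        (fun k _ hk => by simp [rot, hx, hx2, Ne.symm hk])]
      simp [rot, hx, hx2]


omit [IsProbabilityMeasure μ] in
lemma phi_split {i j : Fin q} (hij : i ≠ j) (a b : Fin q → ℕ) (ψ : Fin q → ℂ) :
    phi a b ψ = (ψ i ^ a i * (starRingEnd ℂ) (ψ i) ^ b i)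
      * ((ψ j ^ a j * (starRingEnd ℂ) (ψ j) ^ b j)
        * ∏ k ∈ (Finset.univ.erase i).erase j,
            ψ k ^ a k * (starRingEnd ℂ) (ψ k) ^ b k) := by
  have hj : j ∈ Finset.univ.erase i := Finset.mem_erase.mpr ⟨Ne.symm hij, Finset.mem_univ j⟩
  rw [phi, ← Finset.mul_prod_erase Finset.univ _ (Finset.mem_univ i),
    ← Finset.mul_prod_erase _ _ hj]

set_option maxHeartbeats 1000000 in
lemma sum_rule (hsphere : μ {ψ : Fin q → ℂ | ∑ i, Complex.normSq (ψ i) = 1}ᶜ = 0)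
    (c : Fin q → ℕ) :
    ∑ i, ∫ ψ, phi (c + Pi.single i 1) (c + Pi.single i 1) ψ ∂μ = ∫ ψ, phi c c ψ ∂μ := by
  have hpt : ∀ (i : Fin q) (ψ : Fin q → ℂ),
      phi (c + Pi.single i 1) (c + Pi.single i 1) ψ
        = (ψ i * (starRingEnd ℂ) (ψ i)) * phi c c ψ := by
    intro i ψ
    have hdi : (c + Pi.single i 1 : Fin q → ℕ) i = c i + 1 := by simp
    have hdk : ∀ k, k ≠ i → (c + Pi.single i 1 : Fin q → ℕ) k = c k := by
      intro k hk; simp [Pi.single_apply, hk]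
    unfold phi
    rw [← Finset.mul_prod_erase Finset.univ _ (Finset.mem_univ i),
        ← Finset.mul_prod_erase Finset.univ
          (fun k => ψ k ^ c k * (starRingEnd ℂ) (ψ k) ^ c k) (Finset.mem_univ i)]
    rw [Finset.prod_congr rfl (fun k hk => by
      rw [hdk k (Finset.ne_of_mem_erase hk)])]
    rw [hdi]
    ring
  rw [← integral_finset_sum _ (fun i _ => integrable_phi μ hsphere _ _)]
  refine integral_congr_ae ?_
  filter_upwards [ae_sphere μ hsphere] with ψ hψ
  have h2 : ∑ i, ψ i * (starRingEnd ℂ) (ψ i) = 1 := by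
    have h3 : ∑ i, ψ i * (starRingEnd ℂ) (ψ i)
        = ((∑ i, Complex.normSq (ψ i) : ℝ) : ℂ) := by
      push_cast
      exact Finset.sum_congr rfl fun i _ => Complex.mul_conj (ψ i)
    rw [h3, hψ, Complex.ofReal_one]
  calc ∑ i, phi (c + Pi.single i 1) (c + Pi.single i 1) ψ
      = ∑ i, (ψ i * (starRingEnd ℂ) (ψ i)) * phi c c ψ :=
        Finset.sum_congr rfl fun i _ => hpt i ψ
    _ = (∑ i, ψ i * (starRingEnd ℂ) (ψ i)) * phi c c ψ := (Finset.sum_mul _ _ _).symm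
    _ = phi c c ψ := by rw [h2, one_mul]

set_option maxHeartbeats 1000000 in
lemma merge (hsphere : μ {ψ : Fin q → ℂ | ∑ i, Complex.normSq (ψ i) = 1}ᶜ = 0)
    (hinv : ∀ U : Matrix.unitaryGroup (Fin q) ℂ,
      μ.map (fun ψ => (U : Matrix (Fin q) (Fin q) ℂ).mulVec ψ) = μ)
    {i j : Fin q} (hij : i ≠ j) (c : Fin q → ℕ) :
    (((c i + c j).choose (c i) : ℕ) : ℂ) * ∫ ψ, phi c c ψ ∂μ
      = ∫ ψ, phi (Function.update (Function.update c i (c i + c j)) j 0)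
               (Function.update (Function.update c i (c i + c j)) j 0) ψ ∂μ := by
  classical
  set n := c i + c j with hn
  set c' := Function.update (Function.update c i n) j 0 with hc'
  have hc'i : c' i = n := by
    rw [hc', Function.update_of_ne hij, Function.update_self]
  have hc'j : c' j = 0 := by rw [hc', Function.update_self]
  have hc'k : ∀ k, k ≠ i → k ≠ j → c' k = c k := by
    intro k hki hkj
    rw [hc', Function.update_of_ne hkj, Function.update_of_ne hki]
  set cp : ℕ → (Fin q → ℕ) := fun p => Function.update (Function.update c i p) j (n - p)
    with hcp
  have hcpi : ∀ p, cp p i = p := fun p => by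
    rw [hcp]; simp only []; rw [Function.update_of_ne hij, Function.update_self]
  have hcpj : ∀ p, cp p j = n - p := fun p => by
    rw [hcp]; simp only []; rw [Function.update_self]
  have hcpk : ∀ p k, k ≠ i → k ≠ j → cp p k = c k := by
    intro p k hki hkj
    rw [hcp]; simp only []; rw [Function.update_of_ne hkj, Function.update_of_ne hki]
  have hcpc : cp (c i) = c := by
    funext k
    rcases eq_or_ne k i with rfl | hki
    · rw [hcpi]
    · rcases eq_or_ne k j with rfl | hkj
      · rw [hcpj, hn, Nat.add_sub_cancel_left]
      · rw [hcpk _ _ hki hkj]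
  -- Step A: the key identity for every real t
  have key : ∀ t : ℝ, ((1:ℂ) + (t:ℂ)^2)^n * ∫ ψ, phi c' c' ψ ∂μ
      = ∑ p ∈ Finset.range (n+1),
          ((n.choose p : ℂ))^2 * (t:ℂ)^(2*(n-p)) * ∫ ψ, phi (cp p) (cp p) ψ ∂μ := by
    intro t
    set s := Real.sqrt (1 + t^2) with hs
    have hs2 : s^2 = 1 + t^2 := Real.sq_sqrt (by positivity)
    have hs0 : s ≠ 0 := by
      intro h
      rw [h] at hs2
      nlinarith
    set α : ℝ := s⁻¹ with hα
    set β : ℝ := t * s⁻¹ with hβ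
    have hαβ : α^2 + β^2 = 1 := by
      rw [hα, hβ]
      field_simp
      linarith [hs2]
    have hU := rot_mem (q := q) hij hαβ
    have h1 := integral_comp_unitary μ hinv ⟨rot i j α β, hU⟩ (phi c' c')
      (continuous_phi c' c')
    -- pointwise expansion
    have hexp : ∀ ψ : Fin q → ℂ,
        phi c' c' ((rot i j α β).mulVec ψ)
          = ∑ p ∈ Finset.range (n+1), ∑ r ∈ Finset.range (n+1),
              ((n.choose p : ℂ) * (n.choose r : ℂ) * (α:ℂ)^(p+r) * (β:ℂ)^((n-p)+(n-r)))
                * phi (cp p) (cp r) ψ := by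
      intro ψ
      set w : ℂ := (α:ℂ) * ψ i + (β:ℂ) * ψ j with hw
      have hRi : (rot i j α β).mulVec ψ i = w := by
        rw [rot_mulVec hij, if_pos rfl]
      have hRk : ∀ k, k ≠ i → k ≠ j → (rot i j α β).mulVec ψ k = ψ k := by
        intro k hki hkj
        rw [rot_mulVec hij, if_neg hki, if_neg hkj]
      have hsplit := phi_split (q := q) hij c' c' ((rot i j α β).mulVec ψ)
      rw [hsplit, hc'i, hc'j, hRi]
      simp only [pow_zero, one_mul]
      have hrest : ∏ k ∈ (Finset.univ.erase i).erase j,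
          ((rot i j α β).mulVec ψ) k ^ c' k
            * (starRingEnd ℂ) (((rot i j α β).mulVec ψ) k) ^ c' k
          = ∏ k ∈ (Finset.univ.erase i).erase j,
              ψ k ^ c k * (starRingEnd ℂ) (ψ k) ^ c k := by
        refine Finset.prod_congr rfl fun k hk => ?_
        have hkj : k ≠ j := Finset.ne_of_mem_erase hk
        have hki : k ≠ i := Finset.ne_of_mem_erase (Finset.mem_of_mem_erase hk)
        rw [hRk k hki hkj, hc'k k hki hkj]
      rw [hrest]
      -- binomial expansions
      have hcw : (starRingEnd ℂ) w = (α:ℂ) * (starRingEnd ℂ) (ψ i)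
          + (β:ℂ) * (starRingEnd ℂ) (ψ j) := by
        rw [hw, map_add, map_mul, map_mul, Complex.conj_ofReal, Complex.conj_ofReal]
      have hw1 : w ^ n = ∑ p ∈ Finset.range (n+1),
          ((α:ℂ) * ψ i) ^ p * ((β:ℂ) * ψ j) ^ (n - p) * (n.choose p : ℂ) := by
        rw [hw, add_pow]
      have hw2 : (starRingEnd ℂ) w ^ n = ∑ r ∈ Finset.range (n+1),
          ((α:ℂ) * (starRingEnd ℂ) (ψ i)) ^ r
            * ((β:ℂ) * (starRingEnd ℂ) (ψ j)) ^ (n - r) * (n.choose r : ℂ) := by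
        rw [hcw, add_pow]
      rw [hw1, hw2, Finset.sum_mul_sum]
      rw [Finset.sum_mul]
      refine Finset.sum_congr rfl fun p hp => ?_
      rw [Finset.sum_mul]
      refine Finset.sum_congr rfl fun r hr => ?_
      have hsplit2 := phi_split (q := q) hij (cp p) (cp r) ψ
      rw [hsplit2, hcpi, hcpi, hcpj, hcpj]
      have hrest2 : ∏ k ∈ (Finset.univ.erase i).erase j,
          ψ k ^ cp p k * (starRingEnd ℂ) (ψ k) ^ cp r k
          = ∏ k ∈ (Finset.univ.erase i).erase j,
              ψ k ^ c k * (starRingEnd ℂ) (ψ k) ^ c k := by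
        refine Finset.prod_congr rfl fun k hk => ?_
        have hkj : k ≠ j := Finset.ne_of_mem_erase hk
        have hki : k ≠ i := Finset.ne_of_mem_erase (Finset.mem_of_mem_erase hk)
        rw [hcpk p k hki hkj, hcpk r k hki hkj]
      rw [hrest2]
      rw [pow_add, pow_add]
      ring
    -- integrate the expansion
    have h2 : ∫ ψ, phi c' c' ψ ∂μ
        = ∑ p ∈ Finset.range (n+1), ∑ r ∈ Finset.range (n+1),
            ((n.choose p : ℂ) * (n.choose r : ℂ) * (α:ℂ)^(p+r) * (β:ℂ)^((n-p)+(n-r)))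
              * ∫ ψ, phi (cp p) (cp r) ψ ∂μ := by
      rw [← h1, integral_congr_ae (Filter.Eventually.of_forall hexp)]
      rw [integral_finset_sum _ (fun p _ => integrable_finset_sum _
        (fun r _ => ((integrable_phi μ hsphere (cp p) (cp r)).const_mul _)))]
      refine Finset.sum_congr rfl fun p hp => ?_
      rw [integral_finset_sum _ (fun r _ => ((integrable_phi μ hsphere (cp p) (cp r)).const_mul _))]
      exact Finset.sum_congr rfl fun r hr => integral_const_mul _ _
    -- kill off-diagonal terms
    have h3 : ∫ ψ, phi c' c' ψ ∂μ
        = ∑ p ∈ Finset.range (n+1),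
            ((n.choose p : ℂ))^2 * (α:ℂ)^(2*p) * (β:ℂ)^(2*(n-p))
              * ∫ ψ, phi (cp p) (cp p) ψ ∂μ := by
      rw [h2]
      refine Finset.sum_congr rfl fun p hp => ?_
      rw [Finset.sum_eq_single_of_mem p hp (fun r hr hrp => by
        rw [phase_zero μ hinv (cp p) (cp r) i (by rw [hcpi, hcpi]; exact fun h => hrp h.symm),
          mul_zero])]
      rw [sq, show p + p = 2*p from by ring, show (n-p) + (n-p) = 2*(n-p) from by ring]
    -- multiply by (1+t²)^n
    have hu0 : ((1:ℂ) + (t:ℂ)^2) ≠ 0 := by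
      intro h
      have : ((1 + t^2 : ℝ) : ℂ) = 0 := by push_cast; linear_combination h
      rw [Complex.ofReal_eq_zero] at this
      nlinarith
    have hα2 : (α:ℂ)^2 = ((1:ℂ) + (t:ℂ)^2)⁻¹ := by
      rw [hα]
      push_cast
      rw [inv_pow]
      congr 1
      have : ((s:ℂ))^2 = ((s^2 : ℝ) : ℂ) := by push_cast; ring
      rw [this, hs2]
      push_cast
      ring
    have hβ2 : (β:ℂ)^2 = (t:ℂ)^2 * ((1:ℂ) + (t:ℂ)^2)⁻¹ := by
      rw [hβ]
      push_cast
      rw [mul_pow, inv_pow]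
      congr 1
      have : ((s:ℂ))^2 = ((s^2 : ℝ) : ℂ) := by push_cast; ring
      rw [this, hs2]
      push_cast
      ring
    rw [h3, Finset.mul_sum]
    refine Finset.sum_congr rfl fun p hp => ?_
    have hpn : p ≤ n := Nat.lt_succ_iff.mp (Finset.mem_range.mp hp)
    rw [pow_mul, pow_mul, pow_mul, hα2, hβ2, mul_pow]
    have hv : ((1:ℂ)+(t:ℂ)^2)^n = ((1:ℂ)+(t:ℂ)^2)^p * ((1:ℂ)+(t:ℂ)^2)^(n-p) := by
      rw [← pow_add, Nat.add_sub_cancel' hpn]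
    rw [hv, inv_pow, inv_pow]
    have hvp : ((1:ℂ)+(t:ℂ)^2)^p ≠ 0 := pow_ne_zero _ hu0
    have hvnp : ((1:ℂ)+(t:ℂ)^2)^(n-p) ≠ 0 := pow_ne_zero _ hu0
    field_simp
  -- Step B: polynomial coefficient extraction
  set J : ℕ → ℂ := fun p => ∫ ψ, phi (cp p) (cp p) ψ ∂μ with hJ
  set Jc' : ℂ := ∫ ψ, phi c' c' ψ ∂μ with hJc'
  set P : Polynomial ℂ :=
      (∑ p ∈ Finset.range (n+1),
        Polynomial.monomial (2*(n-p)) (((n.choose p : ℂ))^2 * J p))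
      - (∑ k ∈ Finset.range (n+1),
        Polynomial.monomial (2*k) ((n.choose k : ℂ) * Jc')) with hP
  have hPeval : ∀ t : ℝ, P.eval ((t : ℝ) : ℂ) = 0 := by
    intro t
    rw [hP, Polynomial.eval_sub, Polynomial.eval_finset_sum, Polynomial.eval_finset_sum]
    simp only [Polynomial.eval_monomial]
    have hbin : ∑ k ∈ Finset.range (n+1), (n.choose k : ℂ) * Jc' * ((t:ℂ))^(2*k)
        = ((1:ℂ) + (t:ℂ)^2)^n * Jc' := by
      have : ((t:ℂ)^2 + 1)^n = ∑ k ∈ Finset.range (n+1),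
          ((t:ℂ)^2)^k * 1^(n-k) * (n.choose k : ℂ) := add_pow _ _ n
      rw [add_comm ((1:ℂ)) ((t:ℂ)^2), this, Finset.sum_mul]
      refine Finset.sum_congr rfl fun k hk => ?_
      rw [← pow_mul]
      ring
    rw [hbin, key t]
    rw [sub_eq_zero]
    refine Finset.sum_congr rfl fun p hp => ?_
    ring
  have hP0 : P = 0 := by
    refine Polynomial.eq_zero_of_infinite_isRoot P ?_
    refine Set.infinite_of_injective_forall_mem (f := fun t : ℝ => (t : ℂ))
      Complex.ofReal_injective ?_
    intro t
    exact hPeval t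
  -- coefficient extraction at degree 2*(c j)
  have hcoeff := congrArg (fun Q : Polynomial ℂ => Q.coeff (2 * (c j))) hP0
  simp only [Polynomial.coeff_zero, hP, Polynomial.coeff_sub,
    Polynomial.finset_sum_coeff, Polynomial.coeff_monomial] at hcoeff
  have hci : c i ∈ Finset.range (n+1) := Finset.mem_range.mpr (by omega)
  have hcj : c j ∈ Finset.range (n+1) := Finset.mem_range.mpr (by omega)
  rw [Finset.sum_eq_single_of_mem (c i) hci (fun p hp hpe => by
      rw [if_neg]
      have := Finset.mem_range.mp hp
      omega)] at hcoeff
  rw [Finset.sum_eq_single_of_mem (c j) hcj (fun k hk hke => by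
      rw [if_neg]
      omega)] at hcoeff
  rw [if_pos (by omega), if_pos rfl] at hcoeff
  have heq : ((n.choose (c i) : ℂ))^2 * J (c i) = (n.choose (c j) : ℂ) * Jc' := by
    linear_combination hcoeff
  have hsymm : n.choose (c j) = n.choose (c i) := by
    have : c j = n - c i := by omega
    rw [this]
    exact Nat.choose_symm (by omega)
  rw [hsymm] at heq
  have hCne : ((n.choose (c i) : ℂ)) ≠ 0 := by
    exact_mod_cast Nat.cast_ne_zero.mpr (Nat.choose_pos (by omega)).ne'
  have := mul_left_cancel₀ hCne (by
    rw [← heq]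
    ring : (n.choose (c i) : ℂ) * ((n.choose (c i) : ℂ) * J (c i))
      = (n.choose (c i) : ℂ) * Jc')
  rw [hJ] at this
  simp only [] at this
  rw [hcpc] at this
  exact this

lemma J_zero : ∫ ψ, phi (0 : Fin q → ℕ) 0 ψ ∂μ = 1 := by
  have h : ∀ ψ : Fin q → ℂ, phi (0 : Fin q → ℕ) 0 ψ = 1 := by
    intro ψ; unfold phi; simp
  rw [integral_congr_ae (Filter.Eventually.of_forall h)]
  simp

lemma merge_all (hsphere : μ {ψ : Fin q → ℂ | ∑ i, Complex.normSq (ψ i) = 1}ᶜ = 0)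
    (hinv : ∀ U : Matrix.unitaryGroup (Fin q) ℂ,
      μ.map (fun ψ => (U : Matrix (Fin q) (Fin q) ℂ).mulVec ψ) = μ)
    (i0 : Fin q) (c : Fin q → ℕ) :
    ((∑ k, c k).factorial : ℂ) * ∫ ψ, phi c c ψ ∂μ
      = ((∏ k, (c k).factorial : ℕ) : ℂ)
          * ∫ ψ, phi (Pi.single i0 (∑ k, c k)) (Pi.single i0 (∑ k, c k)) ψ ∂μ := by
  classical
  suffices H : ∀ (s : Finset (Fin q)), i0 ∉ s → ∀ c : Fin q → ℕ,
      (∀ k, k ≠ i0 → k ∉ s → c k = 0) →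
      ((∑ k, c k).factorial : ℂ) * ∫ ψ, phi c c ψ ∂μ
        = ((∏ k, (c k).factorial : ℕ) : ℂ)
            * ∫ ψ, phi (Pi.single i0 (∑ k, c k)) (Pi.single i0 (∑ k, c k)) ψ ∂μ by
    refine H (Finset.univ.erase i0) (by simp) c (fun k hk hk2 => ?_)
    exact absurd (Finset.mem_erase.mpr ⟨hk, Finset.mem_univ k⟩) hk2
  intro s
  induction s using Finset.induction_on with
  | empty =>
    intro _ c hc
    have hsum : ∑ k, c k = c i0 :=
      Finset.sum_eq_single_of_mem i0 (Finset.mem_univ i0)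
        (fun k _ hk => hc k hk (Finset.notMem_empty k))
    have hceq : c = Pi.single i0 (∑ k, c k) := by
      funext k
      rcases eq_or_ne k i0 with rfl | hk
      · rw [Pi.single_eq_same, hsum]
      · rw [Pi.single_eq_of_ne hk, hc k hk (Finset.notMem_empty k)]
    have hprod : (∏ k, (c k).factorial) = (∑ k, c k).factorial := by
      rw [hsum]
      exact Finset.prod_eq_single_of_mem i0 (Finset.mem_univ i0)
        (fun k _ hk => by rw [hc k hk (Finset.notMem_empty k)]; rfl)
    rw [hprod]
    conv_lhs => rw [hceq]
    rw [Finset.sum_pi_single' i0 (∑ k, c k)]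
    simp
  | @insert j s' hj ih =>
    intro hi0 c hc
    have hji0 : j ≠ i0 := fun h => hi0 (h ▸ Finset.mem_insert_self j s')
    have hi0s' : i0 ∉ s' := fun h => hi0 (Finset.mem_insert_of_mem h)
    have hij : i0 ≠ j := Ne.symm hji0
    have hi0mem : i0 ∈ Finset.univ \ {j} := by
      simp only [Finset.mem_sdiff, Finset.mem_univ, Finset.mem_singleton, true_and]
      exact Ne.symm hji0
    set n := c i0 + c j with hn
    set c' := Function.update (Function.update c i0 n) j 0 with hc'def
    have hmerge := merge μ hsphere hinv hij c
    have hc'supp : ∀ k, k ≠ i0 → k ∉ s' → c' k = 0 := by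
      intro k hk hks
      rcases eq_or_ne k j with rfl | hkj
      · rw [hc'def, Function.update_self]
      · rw [hc'def, Function.update_of_ne hkj, Function.update_of_ne hk]
        exact hc k hk (fun hmem => by
          rcases Finset.mem_insert.mp hmem with h | h
          · exact hkj h
          · exact hks h)
    have hupdfact : (fun k => (c' k).factorial)
        = Function.update (Function.update (fun k => (c k).factorial) i0 n.factorial) j
            (0:ℕ).factorial := by
      funext k
      rcases eq_or_ne k j with rfl | hkj
      · rw [hc'def, Function.update_self, Function.update_self]
      · rw [hc'def, Function.update_of_ne hkj, Function.update_of_ne hkj]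
        rcases eq_or_ne k i0 with rfl | hki
        · rw [Function.update_self, Function.update_self]
        · rw [Function.update_of_ne hki, Function.update_of_ne hki]
    have hsum : ∑ k, c' k = ∑ k, c k := by
      have hupd : (fun k => c' k) = Function.update (Function.update c i0 n) j 0 := by
        funext k; rw [hc'def]
      calc ∑ k, c' k
          = 0 + ∑ k ∈ Finset.univ \ {j}, Function.update c i0 n k := by
            rw [hc'def]
            exact Finset.sum_update_of_mem (Finset.mem_univ j) _ _
        _ = 0 + (n + ∑ k ∈ (Finset.univ \ {j}) \ {i0}, c k) := by
            rw [Finset.sum_update_of_mem hi0mem]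
        _ = ∑ k, c k := by
            have h2 : ∑ k, c k = c j + ∑ k ∈ Finset.univ \ {j}, c k :=
              Finset.sum_eq_add_sum_sdiff_singleton_of_mem (Finset.mem_univ j) c
            have h3 : ∑ k ∈ Finset.univ \ {j}, c k
                = c i0 + ∑ k ∈ (Finset.univ \ {j}) \ {i0}, c k :=
              Finset.sum_eq_add_sum_sdiff_singleton_of_mem hi0mem c
            omega
    have hPP : n.choose (c i0) * ∏ k, (c k).factorial = ∏ k, (c' k).factorial := by
      have e1 : ∏ k, (c' k).factorial
          = (0:ℕ).factorial * (n.factorial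
              * ∏ k ∈ (Finset.univ \ {j}) \ {i0}, (c k).factorial) := by
        rw [show ∏ k, (c' k).factorial = ∏ k, (fun k => (c' k).factorial) k from rfl,
          hupdfact]
        rw [Finset.prod_update_of_mem (Finset.mem_univ j)]
        congr 1
        rw [Finset.prod_update_of_mem hi0mem]
      have e2 : ∏ k, (c k).factorial
          = (c j).factorial * ((c i0).factorial
              * ∏ k ∈ (Finset.univ \ {j}) \ {i0}, (c k).factorial) := by
        rw [Finset.prod_eq_mul_prod_sdiff_singleton_of_mem (Finset.mem_univ j)
          (fun k => (c k).factorial)]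
        congr 1
        exact Finset.prod_eq_mul_prod_sdiff_singleton_of_mem hi0mem (fun k => (c k).factorial)
      have e3 : n.choose (c i0) * (c i0).factorial * (c j).factorial = n.factorial := by
        have h4 : n - c i0 = c j := by omega
        have := Nat.choose_mul_factorial_mul_factorial (show c i0 ≤ n by omega)
        rw [h4] at this
        exact this
      rw [e1, e2, Nat.factorial_zero, one_mul, ← e3]
      ring
    have hC : ((n.choose (c i0) : ℕ) : ℂ) ≠ 0 :=
      Nat.cast_ne_zero.mpr (Nat.choose_pos (by omega)).ne'
    have hIH := ih hi0s' c' hc'supp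
    rw [hsum] at hIH
    rw [← hmerge] at hIH
    -- hIH : m! * (C * Jc) = (∏ c'!) * Js
    refine mul_left_cancel₀ hC ?_
    calc ((n.choose (c i0) : ℕ) : ℂ) * (((∑ k, c k).factorial : ℂ) * ∫ ψ, phi c c ψ ∂μ)
        = ((∑ k, c k).factorial : ℂ)
            * (((n.choose (c i0) : ℕ) : ℂ) * ∫ ψ, phi c c ψ ∂μ) := by ring
      _ = ((∏ k, (c' k).factorial : ℕ) : ℂ)
            * ∫ ψ, phi (Pi.single i0 (∑ k, c k)) (Pi.single i0 (∑ k, c k)) ψ ∂μ := hIH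
      _ = ((n.choose (c i0) : ℕ) : ℂ) * (((∏ k, (c k).factorial : ℕ) : ℂ)
            * ∫ ψ, phi (Pi.single i0 (∑ k, c k)) (Pi.single i0 (∑ k, c k)) ψ ∂μ) := by
          rw [← hPP]
          push_cast
          ring

lemma N_step (hsphere : μ {ψ : Fin q → ℂ | ∑ i, Complex.normSq (ψ i) = 1}ᶜ = 0)
    (hinv : ∀ U : Matrix.unitaryGroup (Fin q) ℂ,
      μ.map (fun ψ => (U : Matrix (Fin q) (Fin q) ℂ).mulVec ψ) = μ)
    (i0 : Fin q) (m : ℕ) :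
    ((m+1 : ℕ) : ℂ) * ∫ ψ, phi (Pi.single i0 m) (Pi.single i0 m) ψ ∂μ
      = (((q-1) + (m+1) : ℕ) : ℂ)
          * ∫ ψ, phi (Pi.single i0 (m+1)) (Pi.single i0 (m+1)) ψ ∂μ := by
  classical
  have hq1 : 0 < q := i0.pos
  have hsr := sum_rule μ hsphere (Pi.single i0 m)
  have hsum1 : ∀ k : Fin q, ∑ l, (Pi.single i0 m + Pi.single k 1 : Fin q → ℕ) l = m + 1 := by
    intro k
    simp only [Pi.add_apply]
    rw [Finset.sum_add_distrib, Finset.sum_pi_single', Finset.sum_pi_single']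
    simp
  have hMA : ∀ k : Fin q, ((m+1).factorial : ℂ)
      * ∫ ψ, phi (Pi.single i0 m + Pi.single k 1) (Pi.single i0 m + Pi.single k 1) ψ ∂μ
      = ((∏ l, ((Pi.single i0 m + Pi.single k 1 : Fin q → ℕ) l).factorial : ℕ) : ℂ)
          * ∫ ψ, phi (Pi.single i0 (m+1)) (Pi.single i0 (m+1)) ψ ∂μ := by
    intro k
    have h := merge_all μ hsphere hinv i0 (Pi.single i0 m + Pi.single k 1)
    rw [hsum1 k] at h
    exact h
  have hprod_ne : ∀ k : Fin q, k ≠ i0 →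
      (∏ l, ((Pi.single i0 m + Pi.single k 1 : Fin q → ℕ) l).factorial) = m.factorial := by
    intro k hk
    have hupd : (Pi.single i0 m + Pi.single k 1 : Fin q → ℕ)
        = Function.update (Pi.single i0 m) k 1 := by
      funext l
      rcases eq_or_ne l k with rfl | hlk
      · rw [Function.update_self]
        simp [Pi.single_eq_of_ne hk]
      · rw [Function.update_of_ne hlk]
        simp [Pi.single_eq_of_ne hlk]
    rw [hupd]
    have hcomp : (fun l => (Function.update (Pi.single i0 m : Fin q → ℕ) k 1 l).factorial)
        = Function.update (fun l => ((Pi.single i0 m : Fin q → ℕ) l).factorial) k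
            (1:ℕ).factorial := by
      funext l
      rcases eq_or_ne l k with rfl | hlk
      · rw [Function.update_self, Function.update_self]
      · rw [Function.update_of_ne hlk, Function.update_of_ne hlk]
    rw [show ∏ l, (Function.update (Pi.single i0 m : Fin q → ℕ) k 1 l).factorial
        = ∏ l, (fun l => (Function.update (Pi.single i0 m : Fin q → ℕ) k 1 l).factorial) l from rfl,
      hcomp]
    rw [Finset.prod_update_of_mem (Finset.mem_univ k), Nat.factorial_one, one_mul]
    have hi0mem : i0 ∈ Finset.univ \ {k} := by
      simp only [Finset.mem_sdiff, Finset.mem_univ, Finset.mem_singleton, true_and]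
      exact Ne.symm hk
    refine Finset.prod_eq_single_of_mem i0 hi0mem (fun l _ hl => ?_) |>.trans ?_
    · rw [Pi.single_eq_of_ne hl, Nat.factorial_zero]
    · rw [Pi.single_eq_same]
  have hsingle_eq : (Pi.single i0 m + Pi.single i0 1 : Fin q → ℕ) = Pi.single i0 (m+1) := by
    funext l
    rcases eq_or_ne l i0 with rfl | hl
    · simp
    · simp [Pi.single_eq_of_ne hl]
  have hcard : (Finset.univ \ {i0} : Finset (Fin q)).card = q - 1 := by
    rw [Finset.card_sdiff_of_subset (by simp)]
    simp
  have hfne : ((m.factorial : ℕ) : ℂ) ≠ 0 :=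
    Nat.cast_ne_zero.mpr (Nat.factorial_pos m).ne'
  refine mul_left_cancel₀ hfne ?_
  have main : ((m+1).factorial : ℂ) * ∫ ψ, phi (Pi.single i0 m) (Pi.single i0 m) ψ ∂μ
      = ((m+1).factorial : ℂ)
          * ∫ ψ, phi (Pi.single i0 (m+1)) (Pi.single i0 (m+1)) ψ ∂μ
        + ((q-1 : ℕ) : ℂ) * ((m.factorial : ℕ) : ℂ)
          * ∫ ψ, phi (Pi.single i0 (m+1)) (Pi.single i0 (m+1)) ψ ∂μ := by
    calc ((m+1).factorial : ℂ) * ∫ ψ, phi (Pi.single i0 m) (Pi.single i0 m) ψ ∂μ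
        = ∑ k, ((m+1).factorial : ℂ)
            * ∫ ψ, phi (Pi.single i0 m + Pi.single k 1)
                (Pi.single i0 m + Pi.single k 1) ψ ∂μ := by
          rw [← hsr, Finset.mul_sum]
      _ = ((m+1).factorial : ℂ)
            * ∫ ψ, phi (Pi.single i0 (m+1)) (Pi.single i0 (m+1)) ψ ∂μ
          + ∑ k ∈ Finset.univ \ {i0}, ((m.factorial : ℕ) : ℂ)
            * ∫ ψ, phi (Pi.single i0 (m+1)) (Pi.single i0 (m+1)) ψ ∂μ := by
          rw [Finset.sum_eq_add_sum_sdiff_singleton_of_mem (Finset.mem_univ i0)]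
          congr 1
          · rw [hsingle_eq]
          · refine Finset.sum_congr rfl fun k hk => ?_
            have hk' : k ≠ i0 := by
              simp only [Finset.mem_sdiff, Finset.mem_singleton] at hk
              exact hk.2
            rw [hMA k, hprod_ne k hk']
      _ = _ := by
          rw [Finset.sum_const, hcard]
          push_cast
          ring
  calc ((m.factorial : ℕ) : ℂ) * (((m+1:ℕ) : ℂ)
        * ∫ ψ, phi (Pi.single i0 m) (Pi.single i0 m) ψ ∂μ)
      = ((m+1).factorial : ℂ) * ∫ ψ, phi (Pi.single i0 m) (Pi.single i0 m) ψ ∂μ := by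
        rw [Nat.factorial_succ]
        push_cast
        ring
    _ = ((m.factorial : ℕ) : ℂ) * ((((q-1) + (m+1) : ℕ) : ℂ)
        * ∫ ψ, phi (Pi.single i0 (m+1)) (Pi.single i0 (m+1)) ψ ∂μ) := by
        rw [main, Nat.factorial_succ]
        push_cast
        ring

lemma N_closed (hsphere : μ {ψ : Fin q → ℂ | ∑ i, Complex.normSq (ψ i) = 1}ᶜ = 0)
    (hinv : ∀ U : Matrix.unitaryGroup (Fin q) ℂ,
      μ.map (fun ψ => (U : Matrix (Fin q) (Fin q) ℂ).mulVec ψ) = μ)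
    (i0 : Fin q) (m : ℕ) :
    ((q - 1 + m).factorial : ℂ)
      * ∫ ψ, phi (Pi.single i0 m) (Pi.single i0 m) ψ ∂μ
      = (m.factorial : ℂ) * ((q-1).factorial : ℂ) := by
  induction m with
  | zero =>
    have h0 : (Pi.single i0 0 : Fin q → ℕ) = 0 := Pi.single_zero i0
    rw [h0, J_zero]
    simp
  | succ m ih =>
    have hstep := N_step μ hsphere hinv i0 m
    have hsucc : (q - 1 + (m+1)).factorial
        = (q - 1 + (m+1)) * (q - 1 + m).factorial := by
      rw [show q - 1 + (m+1) = (q - 1 + m) + 1 from by omega, Nat.factorial_succ]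
    have hfacts : ((m+1).factorial : ℂ) = ((m+1 : ℕ) : ℂ) * (m.factorial : ℂ) := by
      rw [Nat.factorial_succ]; push_cast; ring
    calc ((q - 1 + (m+1)).factorial : ℂ)
          * ∫ ψ, phi (Pi.single i0 (m+1)) (Pi.single i0 (m+1)) ψ ∂μ
        = ((q-1+m).factorial : ℂ) * (((q-1+(m+1) : ℕ) : ℂ)
            * ∫ ψ, phi (Pi.single i0 (m+1)) (Pi.single i0 (m+1)) ψ ∂μ) := by
          rw [hsucc]
          push_cast
          ring
      _ = ((q-1+m).factorial : ℂ) * (((m+1 : ℕ) : ℂ)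
            * ∫ ψ, phi (Pi.single i0 m) (Pi.single i0 m) ψ ∂μ) := by
          rw [← hstep]
      _ = ((m+1 : ℕ) : ℂ) * (((q-1+m).factorial : ℂ)
            * ∫ ψ, phi (Pi.single i0 m) (Pi.single i0 m) ψ ∂μ) := by ring
      _ = ((m+1 : ℕ) : ℂ) * ((m.factorial : ℂ) * ((q-1).factorial : ℂ)) := by rw [ih]
      _ = ((m+1).factorial : ℂ) * ((q-1).factorial : ℂ) := by rw [hfacts]; ring

/-! ### Counting permutations -/

def permFiberEquiv {M : ℕ} (f g : Fin M → Fin q) :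
    {σ : Equiv.Perm (Fin M) // ∀ k, f k = g (σ k)}
      ≃ (∀ j : Fin q, {k // f k = j} ≃ {k // g k = j}) where
  toFun σ j :=
    { toFun := fun k => ⟨σ.1 k.1, by rw [← σ.2 k.1, k.2]⟩
      invFun := fun k => ⟨σ.1.symm k.1, by
        rw [σ.2 (σ.1.symm k.1), Equiv.apply_symm_apply, k.2]⟩
      left_inv := fun k => Subtype.ext (σ.1.symm_apply_apply k.1)
      right_inv := fun k => Subtype.ext (σ.1.apply_symm_apply k.1) }
  invFun E := ⟨(Equiv.sigmaFiberEquiv f).symm.trans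
      ((Equiv.sigmaCongrRight E).trans (Equiv.sigmaFiberEquiv g)), fun k =>
    ((E (f k)) ⟨k, rfl⟩).2.symm⟩
  left_inv := by
    intro σ
    apply Subtype.ext
    apply Equiv.ext
    intro k
    rfl
  right_inv := by
    intro E
    funext j
    apply Equiv.ext
    rintro ⟨k, hk⟩
    subst hk
    rfl

lemma count_card {M : ℕ} (f g : Fin M → Fin q) :
    (Finset.univ.filter fun σ : Equiv.Perm (Fin M) => ∀ k, f k = g (σ k)).card
      = ∏ j : Fin q, Fintype.card ({k // f k = j} ≃ {k // g k = j}) := by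
  classical
  rw [← Fintype.card_subtype, Fintype.card_congr (permFiberEquiv f g), Fintype.card_pi]

lemma prod_count {M : ℕ} (f : Fin M → Fin q) (h : Fin q → ℂ) :
    ∏ k, h (f k) = ∏ j, h j ^ (Finset.univ.filter fun k => f k = j).card := by
  classical
  rw [← Finset.prod_fiberwise_of_maps_to (fun k (_ : k ∈ Finset.univ) => Finset.mem_univ (f k))
    (fun k => h (f k))]
  refine Finset.prod_congr rfl fun j _ => ?_
  have h1 : ∏ k ∈ Finset.univ.filter (fun k => f k = j), h (f k)
      = ∏ k ∈ Finset.univ.filter (fun k => f k = j), h j :=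
    Finset.prod_congr rfl fun k hk => by rw [(Finset.mem_filter.mp hk).2]
  rw [h1, Finset.prod_const]

end HaarMoment

open HaarMoment in
/-- Moments of the uniform (unitarily invariant) probability measure on the unit sphere
of `ℂ^q`. -/
theorem haar_state_moments (q m : ℕ) (hq : 1 ≤ q) (hm : 1 ≤ m)
    (μ : Measure (Fin q → ℂ)) [IsProbabilityMeasure μ]
    (hsphere : μ {ψ : Fin q → ℂ | ∑ i, Complex.normSq (ψ i) = 1}ᶜ = 0)
    (hinv : ∀ U : Matrix.unitaryGroup (Fin q) ℂ,
      μ.map (fun ψ => (U : Matrix (Fin q) (Fin q) ℂ).mulVec ψ) = μ)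
    (f g : Fin m → Fin q) :
    ∫ ψ, ∏ k, ψ (f k) * (starRingEnd ℂ) (ψ (g k)) ∂μ
      = (((q - 1).factorial : ℂ) / ((q + m - 1).factorial : ℂ))
          * ((Finset.univ.filter
              fun σ : Equiv.Perm (Fin m) => ∀ k, f k = g (σ k)).card : ℂ) := by
  classical
  have i0 : Fin q := ⟨0, hq⟩
  set cf : Fin q → ℕ := fun j => (Finset.univ.filter fun k => f k = j).card with hcf
  set cg : Fin q → ℕ := fun j => (Finset.univ.filter fun k => g k = j).card with hcg
  have hintegrand : ∀ ψ : Fin q → ℂ,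
      (∏ k, ψ (f k) * (starRingEnd ℂ) (ψ (g k))) = phi cf cg ψ := by
    intro ψ
    rw [Finset.prod_mul_distrib]
    unfold phi
    rw [Finset.prod_mul_distrib]
    congr 1
    · exact prod_count f (fun j => ψ j)
    · exact prod_count g (fun j => (starRingEnd ℂ) (ψ j))
  rw [integral_congr_ae (Filter.Eventually.of_forall hintegrand)]
  have hsumf : ∑ j, cf j = m := by
    have h := Finset.card_eq_sum_card_fiberwise
      (fun (k : Fin m) (_ : k ∈ Finset.univ) => Finset.mem_univ (f k))
    rw [Finset.card_univ, Fintype.card_fin] at h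
    exact h.symm
  have hidx : q + m - 1 = q - 1 + m := by omega
  rw [hidx]
  by_cases hceq : cf = cg
  · -- balanced case
    rw [← hceq]
    have hcard : (Finset.univ.filter
        fun σ : Equiv.Perm (Fin m) => ∀ k, f k = g (σ k)).card
        = ∏ j, (cf j).factorial := by
      rw [count_card f g]
      refine Finset.prod_congr rfl fun j _ => ?_
      have hfj : Fintype.card {k // f k = j} = cf j := Fintype.card_subtype _
      have hgj : Fintype.card {k // g k = j} = cg j := Fintype.card_subtype _
      have e : {k // f k = j} ≃ {k // g k = j} :=
        Fintype.equivOfCardEq (by rw [hfj, hgj, hceq])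
      rw [Fintype.card_equiv e, hfj]
    rw [hcard]
    have h1 := merge_all μ hsphere hinv i0 cf
    rw [hsumf] at h1
    have h2 := N_closed μ hsphere hinv i0 m
    have hmf : ((m.factorial : ℕ) : ℂ) ≠ 0 :=
      Nat.cast_ne_zero.mpr (Nat.factorial_pos m).ne'
    have hqf : (((q - 1 + m).factorial : ℕ) : ℂ) ≠ 0 :=
      Nat.cast_ne_zero.mpr (Nat.factorial_pos _).ne'
    rw [div_mul_eq_mul_div, eq_div_iff hqf]
    -- goal : J * (q-1+m)! = (q-1)! * ∏ (cf j)!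
    refine mul_left_cancel₀ hmf ?_
    calc ((m.factorial : ℕ) : ℂ)
          * ((∫ ψ, phi cf cf ψ ∂μ) * (((q - 1 + m).factorial : ℕ) : ℂ))
        = (((q - 1 + m).factorial : ℕ) : ℂ)
            * ((m.factorial : ℂ) * ∫ ψ, phi cf cf ψ ∂μ) := by ring
      _ = (((q - 1 + m).factorial : ℕ) : ℂ)
            * (((∏ j, (cf j).factorial : ℕ) : ℂ)
              * ∫ ψ, phi (Pi.single i0 m) (Pi.single i0 m) ψ ∂μ) := by rw [h1]
      _ = ((∏ j, (cf j).factorial : ℕ) : ℂ)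
            * (((q - 1 + m).factorial : ℂ)
              * ∫ ψ, phi (Pi.single i0 m) (Pi.single i0 m) ψ ∂μ) := by ring
      _ = ((∏ j, (cf j).factorial : ℕ) : ℂ)
            * ((m.factorial : ℂ) * ((q-1).factorial : ℂ)) := by rw [h2]
      _ = ((m.factorial : ℕ) : ℂ) * (((q - 1).factorial : ℂ)
            * ((∏ j, (cf j).factorial : ℕ) : ℂ)) := by push_cast; ring
  · -- unbalanced case
    obtain ⟨j0, hj0⟩ := Function.ne_iff.mp hceq
    rw [phase_zero μ hinv cf cg j0 hj0]
    have hcard : (Finset.univ.filter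
        fun σ : Equiv.Perm (Fin m) => ∀ k, f k = g (σ k)).card = 0 := by
      rw [count_card f g]
      refine Finset.prod_eq_zero (Finset.mem_univ j0) ?_
      rw [Fintype.card_eq_zero_iff]
      refine ⟨fun e => hj0 ?_⟩
      have h3 := Fintype.card_congr e
      rw [Fintype.card_subtype, Fintype.card_subtype] at h3
      exact h3
    rw [hcard]
    simp
end

section
/- Let H be a finite group, let Γ be a finite connected graph with vertex set V and edge set E, let v₀ ∈ V be a fixed root, and for each edge e = (i,j) ∈ E let f_e : H → ℝ satisfy 0 ≤ f_e(h) ≤ 1 for all h ∈ H. Then for any spanning tree T ⊆ E of Γ, the pinned partition function is bounded by the tree factorization: ∑_{σ : V → H, σ(v₀) = 1} ∏_{e = (i,j) ∈ E} f_e(σ(i) · σ(j)⁻¹) ≤ ∏_{e ∈ T} (∑_{h ∈ H} f_e(h)). -/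
/-- Spanning-tree bound for a pinned partition function: for a finite connected graph
with vertex set `V`, edge set `E` (with chosen orientations `ends : E → V × V`), a root
`v₀`, edge weights `0 ≤ f_e ≤ 1` on a finite group `H`, and a spanning tree `T ⊆ E`,
`∑_{σ : V → H, σ(v₀)=1} ∏_{e=(i,j)∈E} f_e(σ i · (σ j)⁻¹) ≤ ∏_{e∈T} ∑_h f_e(h)`. -/
theorem spanning_tree_partition_function_bound
    {V E H : Type*} [Fintype V] [DecidableEq V] [Fintype E] [DecidableEq E]
    [Fintype H] [DecidableEq H] [Group H]
    (ends : E → V × V)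
    (hloop : ∀ e, (ends e).1 ≠ (ends e).2)
    (hconn : (SimpleGraph.fromRel fun a b => ∃ e, ends e = (a, b)).Connected)
    (v₀ : V) (f : E → H → ℝ)
    (hf : ∀ e h, 0 ≤ f e h ∧ f e h ≤ 1)
    (T : Finset E)
    (hinjT : ∀ e₁ ∈ T, ∀ e₂ ∈ T, Sym2.mk (ends e₁) = Sym2.mk (ends e₂) → e₁ = e₂)
    (htree : (SimpleGraph.fromRel fun a b => ∃ e ∈ T, ends e = (a, b)).IsTree) :
    ∑ σ ∈ Finset.univ.filter (fun σ : V → H => σ v₀ = 1),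
        ∏ e, f e (σ (ends e).1 * (σ (ends e).2)⁻¹)
      ≤ ∏ e ∈ T, ∑ h, f e h := by
  classical
  set G := SimpleGraph.fromRel fun a b => ∃ e ∈ T, ends e = (a, b) with hG
  -- injectivity of the edge-value map on pinned configurations
  have key : ∀ σ τ : V → H, σ v₀ = 1 → τ v₀ = 1 →
      (∀ e ∈ T, σ (ends e).1 * (σ (ends e).2)⁻¹ = τ (ends e).1 * (τ (ends e).2)⁻¹) →
      σ = τ := by
    intro σ τ hσ hτ hedge
    have hinv : ∀ {a b : V}, G.Adj a b → (τ a)⁻¹ * σ a = (τ b)⁻¹ * σ b := by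
      intro a b hab
      have hfrom : a ≠ b ∧ ((∃ e ∈ T, ends e = (a, b)) ∨ (∃ e ∈ T, ends e = (b, a))) := by
        simpa [hG, SimpleGraph.fromRel_adj] using hab
      rcases hfrom.2 with ⟨e, heT, hends⟩ | ⟨e, heT, hends⟩
      · have h := hedge e heT
        rw [hends] at h
        have h2 : (τ a)⁻¹ * (σ a * (σ b)⁻¹) = (τ b)⁻¹ := by rw [h]; group
        calc (τ a)⁻¹ * σ a = (τ a)⁻¹ * (σ a * (σ b)⁻¹) * σ b := by group
          _ = (τ b)⁻¹ * σ b := by rw [h2]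
      · have h := hedge e heT
        rw [hends] at h
        have h2 : (τ b)⁻¹ * (σ b * (σ a)⁻¹) = (τ a)⁻¹ := by rw [h]; group
        calc (τ a)⁻¹ * σ a = (τ b)⁻¹ * (σ b * (σ a)⁻¹) * σ a := by rw [h2]
          _ = (τ b)⁻¹ * σ b := by group
    have hwalk : ∀ {a b : V}, G.Walk a b → (τ a)⁻¹ * σ a = (τ b)⁻¹ * σ b := by
      intro a b p
      induction p with
      | nil => rfl
      | cons h p ih => rw [hinv h]; exact ih
    funext v
    obtain ⟨p⟩ := htree.isConnected v₀ v
    have := hwalk p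
    rw [hσ, hτ] at this
    have h1 : (τ v)⁻¹ * σ v = 1 := by simpa using this.symm
    have := mul_eq_one_iff_inv_eq.mp h1
    simpa using this.symm
  -- step 1: drop the non-tree factors
  have step1 : ∀ σ : V → H, ∏ e, f e (σ (ends e).1 * (σ (ends e).2)⁻¹)
      ≤ ∏ e ∈ T, f e (σ (ends e).1 * (σ (ends e).2)⁻¹) := by
    intro σ
    rw [← Finset.prod_sdiff (Finset.subset_univ T)]
    have h1 : ∏ e ∈ Finset.univ \ T, f e (σ (ends e).1 * (σ (ends e).2)⁻¹) ≤ 1 :=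
      Finset.prod_le_one (fun e _ => (hf e _).1) (fun e _ => (hf e _).2)
    have h2 : (0:ℝ) ≤ ∏ e ∈ T, f e (σ (ends e).1 * (σ (ends e).2)⁻¹) :=
      Finset.prod_nonneg fun e _ => (hf e _).1
    calc _ ≤ 1 * ∏ e ∈ T, f e (σ (ends e).1 * (σ (ends e).2)⁻¹) :=
          mul_le_mul_of_nonneg_right h1 h2
      _ = _ := one_mul _
  -- the map to tree-edge values
  set Φ : (V → H) → (↥(T : Finset E) → H) :=
    fun σ e => σ (ends e.1).1 * (σ (ends e.1).2)⁻¹ with hΦ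
  calc ∑ σ ∈ Finset.univ.filter (fun σ : V → H => σ v₀ = 1),
          ∏ e, f e (σ (ends e).1 * (σ (ends e).2)⁻¹)
      ≤ ∑ σ ∈ Finset.univ.filter (fun σ : V → H => σ v₀ = 1),
          ∏ e ∈ T, f e (σ (ends e).1 * (σ (ends e).2)⁻¹) :=
        Finset.sum_le_sum (fun σ _ => step1 σ)
    _ = ∑ σ ∈ Finset.univ.filter (fun σ : V → H => σ v₀ = 1),
          ∏ e : ↥(T : Finset E), f e.1 (Φ σ e) := by
        refine Finset.sum_congr rfl (fun σ _ => ?_)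
        rw [← Finset.prod_attach T (fun e => f e (σ (ends e).1 * (σ (ends e).2)⁻¹))]
        rfl
    _ = ∑ g ∈ (Finset.univ.filter (fun σ : V → H => σ v₀ = 1)).image Φ,
          ∏ e : ↥(T : Finset E), f e.1 (g e) := by
        rw [Finset.sum_image]
        intro σ hσ τ hτ hΦeq
        simp only [Finset.mem_coe, Finset.mem_filter] at hσ hτ
        refine key σ τ hσ.2 hτ.2 (fun e heT => ?_)
        exact congrFun hΦeq ⟨e, heT⟩
    _ ≤ ∑ g : ↥(T : Finset E) → H, ∏ e : ↥(T : Finset E), f e.1 (g e) := by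
        refine Finset.sum_le_sum_of_subset_of_nonneg (Finset.subset_univ _) ?_
        intro g _ _
        exact Finset.prod_nonneg (fun e _ => (hf e.1 _).1)
    _ = ∏ e : ↥(T : Finset E), ∑ h, f e.1 h := by
        rw [Finset.prod_univ_sum]
        rw [Fintype.piFinset_univ]
    _ = ∏ e ∈ T, ∑ h, f e h := by
        rw [← Finset.prod_attach T (fun e => ∑ h, f e h), Finset.univ_eq_attach]
end

section
/- Let (Ω, P) be a probability space and let ρ : Ω → Matrix (Fin n) (Fin n) ℂ be a measurable family of density matrices such that ω ↦ Tr(ρ(ω)²) and ω ↦ S(ρ(ω)) are integrable. Then −log(E[Tr(ρ²)]) ≤ E[S(ρ)], i.e., the expected von Neumann entropy is bounded below by minus the logarithm of the expected purity. -/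
set_option maxHeartbeats 1000000


open ComplexOrder MeasureTheory

/-- Matrices inherit the product measurable structure. -/
instance matrixMeasurableSpace {m n α : Type*} [MeasurableSpace α] :
    MeasurableSpace (Matrix m n α) :=
  inferInstanceAs (MeasurableSpace (m → n → α))

/-- The von Neumann entropy of a matrix: `S(ρ) = ∑ᵢ η(λᵢ)` where `λᵢ` are the
eigenvalues of `ρ` and `η(x) = −x log x` (with `η(0) = 0`); set to `0` for
non-Hermitian matrices. -/
noncomputable def vonNeumannEntropy {n : ℕ} (ρ : Matrix (Fin n) (Fin n) ℂ) : ℝ :=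
  if h : ρ.IsHermitian then ∑ i, Real.negMulLog (h.eigenvalues i) else 0

lemma aux_trace_eq_sum_eig {n : ℕ} {A : Matrix (Fin n) (Fin n) ℂ} (hA : A.IsHermitian) :
    A.trace = ∑ i, (hA.eigenvalues i : ℂ) := by
  conv_lhs => rw [hA.spectral_theorem, Unitary.conjStarAlgAut_apply]
  rw [Matrix.trace_mul_cycle, Unitary.coe_star_mul_self, one_mul,
    Matrix.trace_diagonal]
  rfl

lemma aux_trace_sq_eq_sum_eig {n : ℕ} {A : Matrix (Fin n) (Fin n) ℂ} (hA : A.IsHermitian) :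
    (A * A).trace = ∑ i, ((hA.eigenvalues i : ℂ))^2 := by
  conv_lhs => rw [hA.spectral_theorem, Unitary.conjStarAlgAut_apply]
  set U : Matrix (Fin n) (Fin n) ℂ := (hA.eigenvectorUnitary : Matrix (Fin n) (Fin n) ℂ)
  set D : Matrix (Fin n) (Fin n) ℂ := Matrix.diagonal (RCLike.ofReal ∘ hA.eigenvalues)
  have hU : star U * U = 1 := Unitary.coe_star_mul_self hA.eigenvectorUnitary
  have : U * D * star U * (U * D * star U) = U * (D * D) * star U := by
    calc U * D * star U * (U * D * star U) = U * D * (star U * U) * D * star U := by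
          noncomm_ring
      _ = U * (D * D) * star U := by rw [hU]; noncomm_ring
  rw [this, Matrix.trace_mul_cycle, ← mul_assoc, hU, one_mul,
    Matrix.diagonal_mul_diagonal, Matrix.trace_diagonal]
  simp [sq]

lemma aux_neg_log_sum_sq_le {n : ℕ} (lam : Fin n → ℝ) (h0 : ∀ i, 0 ≤ lam i)
    (h1 : ∑ i, lam i = 1) :
    -Real.log (∑ i, (lam i)^2) ≤ ∑ i, Real.negMulLog (lam i) := by
  set s := ∑ i, (lam i)^2 with hs
  have hspos : 0 < s := by
    obtain ⟨i, hi⟩ : ∃ i, lam i ≠ 0 := by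
      by_contra h
      push_neg at h
      simp [h] at h1
    have : 0 < (lam i)^2 := by positivity
    exact this.trans_le (Finset.single_le_sum (f := fun j => (lam j)^2)
      (fun j _ => by positivity) (Finset.mem_univ i))
  have key : ∀ i, lam i - (lam i)^2 / s - lam i * Real.log s ≤ Real.negMulLog (lam i) := by
    intro i
    rcases eq_or_lt_of_le (h0 i) with h | h
    · simp [← h, Real.negMulLog]
    · have hlog : Real.log (lam i / s) ≤ lam i / s - 1 :=
        Real.log_le_sub_one_of_pos (by positivity)
      rw [Real.log_div h.ne' hspos.ne'] at hlog
      have h2 := mul_le_mul_of_nonneg_left hlog (h0 i)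
      have h3 : lam i * (Real.log (lam i) - Real.log s)
          = lam i * Real.log (lam i) - lam i * Real.log s := by ring
      have h4 : lam i * (lam i / s - 1) = (lam i)^2 / s - lam i := by ring
      rw [h3, h4] at h2
      rw [Real.negMulLog]
      linarith
  calc -Real.log s = 1 - s / s - 1 * Real.log s := by
        rw [div_self hspos.ne']; ring
    _ = ∑ i, (lam i - (lam i)^2 / s - lam i * Real.log s) := by
        rw [Finset.sum_sub_distrib, Finset.sum_sub_distrib, ← Finset.sum_div,
          ← Finset.sum_mul, h1, ← hs]
    _ ≤ ∑ i, Real.negMulLog (lam i) := Finset.sum_le_sum (fun i _ => key i)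

/-- For a measurable family of density matrices on a probability space, with integrable
purity and entropy, `−log 𝔼[Tr(ρ²)] ≤ 𝔼[S(ρ)]`. -/
theorem neg_log_expected_purity_le_expected_entropy
    {n : ℕ} {Ω : Type*} [MeasurableSpace Ω] (P : Measure Ω) [IsProbabilityMeasure P]
    (ρ : Ω → Matrix (Fin n) (Fin n) ℂ) (hmeas : Measurable ρ)
    (hdens : ∀ ω, (ρ ω).PosSemidef ∧ (ρ ω).trace = 1)
    (hint_purity : Integrable (fun ω => ((ρ ω * ρ ω).trace).re) P)
    (hint_entropy : Integrable (fun ω => vonNeumannEntropy (ρ ω)) P) :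
    -Real.log (∫ ω, ((ρ ω * ρ ω).trace).re ∂P)
      ≤ ∫ ω, vonNeumannEntropy (ρ ω) ∂P := by
  set p : Ω → ℝ := fun ω => ((ρ ω * ρ ω).trace).re with hp
  -- eigenvalue facts
  have hherm : ∀ ω, (ρ ω).IsHermitian := fun ω => (hdens ω).1.1
  have hsum1 : ∀ ω, ∑ i, (hherm ω).eigenvalues i = 1 := by
    intro ω
    have := aux_trace_eq_sum_eig (hherm ω)
    rw [(hdens ω).2] at this
    exact_mod_cast this.symm
  have hpsum : ∀ ω, p ω = ∑ i, ((hherm ω).eigenvalues i)^2 := by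
    intro ω
    have := aux_trace_sq_eq_sum_eig (hherm ω)
    rw [hp]
    simp [this, Complex.re_sum, ← Complex.ofReal_pow]
  have hΩ : Nonempty Ω := by
    by_contra h
    rw [not_nonempty_iff] at h
    have h1 := measure_univ (μ := P)
    rw [Set.univ_eq_empty_iff.mpr h] at h1
    simp at h1
  have hn : 0 < n := by
    rcases Nat.eq_zero_or_pos n with h | h
    · exfalso
      subst h
      simpa using hsum1 (Classical.arbitrary Ω)
    · exact h
  -- p ω ≥ 1/n
  have hplb : ∀ ω, 1 / (n : ℝ) ≤ p ω := by
    intro ω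
    rw [hpsum ω]
    have := sq_sum_le_card_mul_sum_sq (s := Finset.univ) (f := (hherm ω).eigenvalues)
    rw [hsum1 ω] at this
    simp only [Finset.card_univ, Fintype.card_fin] at this
    rw [div_le_iff₀ (by positivity)]
    nlinarith [this]
  set m := ∫ ω, p ω ∂P with hm
  have hmlb : 1 / (n : ℝ) ≤ m := by
    have := integral_mono (integrable_const (1 / (n : ℝ))) hint_purity hplb
    rwa [integral_const, probReal_univ, one_smul] at this
  have hmpos : 0 < m := lt_of_lt_of_le (by positivity) hmlb
  -- pointwise bound
  have hpoint : ∀ ω, 1 - p ω / m - Real.log m ≤ vonNeumannEntropy (ρ ω) := by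
    intro ω
    have hppos : 0 < p ω := lt_of_lt_of_le (by positivity) (hplb ω)
    have h1 : -Real.log (p ω) ≤ vonNeumannEntropy (ρ ω) := by
      rw [vonNeumannEntropy, dif_pos (hherm ω), hpsum ω]
      exact aux_neg_log_sum_sq_le _ (fun i => (hdens ω).1.eigenvalues_nonneg i) (hsum1 ω)
    have h2 : Real.log (p ω / m) ≤ p ω / m - 1 := Real.log_le_sub_one_of_pos (by positivity)
    rw [Real.log_div hppos.ne' hmpos.ne'] at h2
    linarith
  have hlhs : Integrable (fun ω => 1 - p ω / m - Real.log m) P :=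
    (((integrable_const 1).sub (hint_purity.div_const m)).sub (integrable_const _))
  have := integral_mono hlhs hint_entropy hpoint
  calc -Real.log (∫ ω, ((ρ ω * ρ ω).trace).re ∂P)
      = ∫ ω, (1 - p ω / m - Real.log m) ∂P := by
        have hA : Integrable (fun ω => 1 - p ω / m) P :=
          (integrable_const 1).sub (hint_purity.div_const m)
        have hB : Integrable (fun ω => p ω / m) P := hint_purity.div_const m
        rw [integral_sub hA (integrable_const _), integral_sub (integrable_const 1) hB,
          integral_div, integral_const, integral_const, probReal_univ,
          one_smul, one_smul, ← hm, div_self hmpos.ne']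
        ring
    _ ≤ ∫ ω, vonNeumannEntropy (ρ ω) ∂P := this
end
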